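/- arXiv:2503.16633 — 3 statements merged into one kernel-verified Lean document; each statement's English description precedes it below -/
import Mathlib

section
/- Hölder-type second-moment bound for increments of the scaled Gaussian input. Assume σ satisfies L1 and L2. Then for every T > 0 there exist constants K > 0, γ ∈ (0,1) and x̄ > 0 such that for every x ∈ (0, x̄] and all s₁, t₁, s₂, t₂ ∈ [−T, T]: E[ ( (J(x t₁) − J(x s₁))/σ(x) − (J(x t₂) − J(x s₂))/σ(x) )² ] ≤ K ( |s₁ − s₂|² + |t₁ − t₂|² )^{γ}. -/
open MeasureTheory ProbabilityTheory Filter Topology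

noncomputable section

/-- Covariance function of a centered Gaussian process with stationary increments
and standard deviation function `σ`:
`Cov(J(t), J(s)) = (σ²(|t|) + σ²(|s|) − σ²(|t−s|))/2`. -/
def covFromStd (σ : ℝ → ℝ) : ℝ → ℝ → ℝ := fun t s =>
  (σ |t| ^ 2 + σ |s| ^ 2 - σ |t - s| ^ 2) / 2

/-- `X` is a real-valued centered Gaussian process (indexed by `ℝ`) with covariance
function `K`, under the measure `P`: every finite linear combination of its values is a
centered Gaussian real random variable with the variance prescribed by `K`. -/
def IsCenteredGaussian1 {Ω : Type*} [MeasurableSpace Ω] (P : Measure Ω)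
    (X : ℝ → Ω → ℝ) (K : ℝ → ℝ → ℝ) : Prop :=
  (∀ t, Measurable (X t)) ∧
  ∀ (k : ℕ) (t : Fin k → ℝ) (c : Fin k → ℝ),
    P.map (fun ω => ∑ a, c a * X (t a) ω)
      = gaussianReal 0 (∑ a, ∑ b, c a * c b * K (t a) (t b)).toNNReal

section Aux

open Real Set
open scoped NNReal ENNReal

lemma integral_sq_exp_neg_mul_sq {b : ℝ} (hb : 0 < b) :
    ∫ x : ℝ, x ^ 2 * rexp (-b * x ^ 2) = Real.sqrt (π / b) / (2 * b) := by
  have hint2 : Integrable fun x : ℝ => x ^ 2 * rexp (-b * x ^ 2) := by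
    have := integrable_rpow_mul_exp_neg_mul_sq hb (by norm_num : (-1:ℝ) < 2)
    refine this.congr (Filter.Eventually.of_forall fun x => ?_)
    norm_num [show ((2:ℝ) = ((2:ℕ):ℝ)) from by norm_num, Real.rpow_natCast]
  have hu : ∀ x : ℝ, HasDerivAt (fun x : ℝ => x) 1 x := fun x => hasDerivAt_id x
  have hv : ∀ x : ℝ, HasDerivAt (fun x : ℝ => rexp (-b * x ^ 2))
      ((-b * (2 * x)) * rexp (-b * x ^ 2)) x := by
    intro x
    have h1 : HasDerivAt (fun x : ℝ => -b * x ^ 2) (-b * (2 * x)) x := by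
      simpa using ((hasDerivAt_pow 2 x).const_mul (-b))
    simpa [mul_comm] using h1.exp
  have huv' : Integrable ((fun x : ℝ => x) * fun x => (-b * (2 * x)) * rexp (-b * x ^ 2)) := by
    have : ((fun x : ℝ => x) * fun x => (-b * (2 * x)) * rexp (-b * x ^ 2))
        = fun x => (-2*b) * (x ^ 2 * rexp (-b * x ^ 2)) := by
      ext x; simp [Pi.mul_apply]; ring
    rw [this]; exact hint2.const_mul _
  have hu'v : Integrable ((fun _ : ℝ => (1:ℝ)) * fun x => rexp (-b * x ^ 2)) := by
    have := integrable_exp_neg_mul_sq hb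
    refine this.congr (Filter.Eventually.of_forall fun x => ?_)
    simp
  have huv : Integrable ((fun x : ℝ => x) * fun x => rexp (-b * x ^ 2)) := by
    exact integrable_mul_exp_neg_mul_sq hb
  have H := integral_mul_deriv_eq_deriv_mul_of_integrable (u := fun x : ℝ => x)
    (v := fun x : ℝ => rexp (-b * x ^ 2)) (fun x _ => hu x) (fun x _ => hv x) huv' hu'v huv
  have h1 : ∫ x : ℝ, x * ((-b * (2 * x)) * rexp (-b * x ^ 2))
      = (-2*b) * ∫ x : ℝ, x ^ 2 * rexp (-b * x ^ 2) := by
    rw [← MeasureTheory.integral_const_mul]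
    congr 1; ext x; ring
  have h2 : ∫ x : ℝ, (1:ℝ) * rexp (-b * x ^ 2) = Real.sqrt (π / b) := by
    simp only [one_mul]
    exact integral_gaussian b
  rw [h1, h2] at H
  field_simp at H ⊢
  linarith

lemma pdf_mul_sq_eq (v : ℝ≥0) (hv : v ≠ 0) (x : ℝ) :
    gaussianPDFReal 0 v x * x ^ 2
      = (Real.sqrt (2 * π * v))⁻¹ * (x ^ 2 * rexp (-(2*(v:ℝ))⁻¹ * x ^ 2)) := by
  have hvpos : (0:ℝ) < v := lt_of_le_of_ne (v.coe_nonneg) (by exact_mod_cast hv.symm)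
  rw [gaussianPDFReal]
  rw [show -(x - 0) ^ 2 / (2 * (v:ℝ)) = -(2*(v:ℝ))⁻¹ * x ^ 2 by field_simp; ring]
  ring

lemma integrable_sq_gaussianPDF (v : ℝ≥0) (hv : v ≠ 0) :
    Integrable (fun x : ℝ => gaussianPDFReal 0 v x * x ^ 2) := by
  have hvpos : (0:ℝ) < v := lt_of_le_of_ne (v.coe_nonneg) (by exact_mod_cast hv.symm)
  have hb : (0:ℝ) < (2*(v:ℝ))⁻¹ := by positivity
  have h2 : Integrable fun x : ℝ => x ^ 2 * rexp (-(2*(v:ℝ))⁻¹ * x ^ 2) := by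
    have := integrable_rpow_mul_exp_neg_mul_sq hb (by norm_num : (-1:ℝ) < 2)
    refine this.congr (Filter.Eventually.of_forall fun x => ?_)
    norm_num [show ((2:ℝ) = ((2:ℕ):ℝ)) from by norm_num, Real.rpow_natCast]
  exact (h2.const_mul _).congr (Filter.Eventually.of_forall fun x => (pdf_mul_sq_eq v hv x).symm)

lemma integral_pdf_sq (v : ℝ≥0) (hv : v ≠ 0) :
    ∫ x : ℝ, gaussianPDFReal 0 v x * x ^ 2 = v := by
  have hvpos : (0:ℝ) < v := lt_of_le_of_ne (v.coe_nonneg) (by exact_mod_cast hv.symm)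
  have hb : (0:ℝ) < (2*(v:ℝ))⁻¹ := by positivity
  calc ∫ x : ℝ, gaussianPDFReal 0 v x * x ^ 2
      = ∫ x : ℝ, (Real.sqrt (2 * π * v))⁻¹ * (x ^ 2 * rexp (-(2*(v:ℝ))⁻¹ * x ^ 2)) := by
        congr 1; ext x; exact pdf_mul_sq_eq v hv x
    _ = (Real.sqrt (2 * π * v))⁻¹ * (Real.sqrt (π / (2*(v:ℝ))⁻¹) / (2 * (2*(v:ℝ))⁻¹)) := by
        rw [MeasureTheory.integral_const_mul, integral_sq_exp_neg_mul_sq hb]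
    _ = v := by
        rw [show π / (2*(v:ℝ))⁻¹ = 2 * π * v by field_simp]
        rw [show (2 * (2*(v:ℝ))⁻¹) = (v:ℝ)⁻¹ by field_simp]
        have h0 : Real.sqrt (2 * π * v) ≠ 0 := by
          refine ne_of_gt (Real.sqrt_pos.mpr ?_)
          positivity
        field_simp

lemma gaussianReal_sq (v : ℝ≥0) :
    Integrable (fun x : ℝ => x ^ 2) (gaussianReal 0 v)
      ∧ ∫ x, x ^ 2 ∂(gaussianReal 0 v) = v := by
  by_cases hv : v = 0
  · subst hv
    rw [gaussianReal_zero_var]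
    constructor
    · refine ⟨(by fun_prop : Measurable fun x : ℝ => x ^ 2).aestronglyMeasurable, ?_⟩
      rw [HasFiniteIntegral, lintegral_dirac]
      simp
    · simp [integral_dirac]
  · rw [gaussianReal_of_var_ne_zero 0 hv]
    have hf : Measurable fun x : ℝ => Real.toNNReal (gaussianPDFReal 0 v x) :=
      (measurable_gaussianPDFReal 0 v).real_toNNReal
    have heq : (volume.withDensity (gaussianPDF 0 v))
        = volume.withDensity (fun x => (Real.toNNReal (gaussianPDFReal 0 v x) : ℝ≥0∞)) := rfl
    rw [heq]
    have hsmul : ∀ x : ℝ, (Real.toNNReal (gaussianPDFReal 0 v x)) • (x ^ 2)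
        = gaussianPDFReal 0 v x * x ^ 2 := by
      intro x
      rw [NNReal.smul_def, smul_eq_mul, Real.coe_toNNReal _ (gaussianPDFReal_nonneg 0 v x)]
    constructor
    · rw [integrable_withDensity_iff_integrable_smul hf]
      exact (integrable_sq_gaussianPDF v hv).congr
        (Filter.Eventually.of_forall fun x => (hsmul x).symm)
    · rw [integral_withDensity_eq_integral_smul hf]
      rw [show (fun x : ℝ => (Real.toNNReal (gaussianPDFReal 0 v x)) • (x ^ 2))
          = fun x : ℝ => gaussianPDFReal 0 v x * x ^ 2 from funext hsmul]
      exact integral_pdf_sq v hv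

lemma gauss_sq_moment {Ω : Type*} [MeasurableSpace Ω] (P : Measure Ω) [IsProbabilityMeasure P]
    (J : ℝ → Ω → ℝ) (Kf : ℝ → ℝ → ℝ) (hJ : IsCenteredGaussian1 P J Kf)
    (k : ℕ) (t c : Fin k → ℝ) :
    Integrable (fun ω => (∑ a, c a * J (t a) ω) ^ 2) P ∧
      ∫ ω, (∑ a, c a * J (t a) ω) ^ 2 ∂P
        = ((∑ a, ∑ b, c a * c b * Kf (t a) (t b)).toNNReal : ℝ) := by
  set Y : Ω → ℝ := fun ω => ∑ a, c a * J (t a) ω with hY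
  have hYm : Measurable Y :=
    Finset.measurable_sum _ (fun a _ => (hJ.1 (t a)).const_mul (c a))
  have hmap := hJ.2 k t c
  set v : ℝ≥0 := (∑ a, ∑ b, c a * c b * Kf (t a) (t b)).toNNReal with hv
  have hg : AEStronglyMeasurable (fun x : ℝ => x ^ 2) (P.map Y) :=
    (measurable_id.pow_const 2).aestronglyMeasurable
  constructor
  · exact (integrable_map_measure hg hYm.aemeasurable).mp
      (by rw [hmap]; exact (gaussianReal_sq v).1)
  · have h1 : ∫ y, y ^ 2 ∂(P.map Y) = ∫ ω, (Y ω) ^ 2 ∂P :=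
      integral_map hYm.aemeasurable hg
    rw [← h1, hmap]
    exact (gaussianReal_sq v).2

lemma second_moment_increment {Ω : Type*} [MeasurableSpace Ω] (P : Measure Ω)
    [IsProbabilityMeasure P] (σ : ℝ → ℝ) (hσ0 : σ 0 = 0) (J : ℝ → Ω → ℝ)
    (hJ : IsCenteredGaussian1 P J (covFromStd σ)) (p q sx : ℝ) (hsx : sx ≠ 0) :
    Integrable (fun ω => ((J p ω - J q ω) / sx) ^ 2) P ∧
      ∫ ω, ((J p ω - J q ω) / sx) ^ 2 ∂P = (σ |p - q|) ^ 2 / sx ^ 2 := by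
  have h := gauss_sq_moment P J (covFromStd σ) hJ 2 ![p, q] ![sx⁻¹, -sx⁻¹]
  simp only [Fin.sum_univ_two, Matrix.cons_val_zero, Matrix.cons_val_one, Matrix.head_cons] at h
  have hfun : (fun ω => (sx⁻¹ * J p ω + -sx⁻¹ * J q ω) ^ 2)
      = fun ω => ((J p ω - J q ω) / sx) ^ 2 := by
    funext ω
    field_simp
    ring
  have hsum : sx⁻¹ * sx⁻¹ * covFromStd σ p p + sx⁻¹ * -sx⁻¹ * covFromStd σ p q
        + (-sx⁻¹ * sx⁻¹ * covFromStd σ q p + -sx⁻¹ * -sx⁻¹ * covFromStd σ q q)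
      = (σ |p - q|) ^ 2 / sx ^ 2 := by
    simp only [covFromStd, sub_self, abs_zero, hσ0, abs_sub_comm q p]
    field_simp
    ring
  rw [hfun, hsum] at h
  have hnn : 0 ≤ (σ |p - q|) ^ 2 / sx ^ 2 := by positivity
  rwa [Real.coe_toNNReal _ hnn] at h

/-- Uniform convergence theorem for slowly-varying-type limits (additive form). -/
lemma uct (h : ℝ → ℝ) (hc : Continuous h)
    (hlim : ∀ v : ℝ, Tendsto (fun y => h (y + v) - h y) atTop (𝓝 0))
    (ε : ℝ) (hε : 0 < ε) :
    ∃ N : ℝ, ∀ y ≥ N, ∀ v ∈ Set.Icc (0:ℝ) 1, |h (y + v) - h y| ≤ ε := by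
  classical
  set E : ℕ → Set ℝ := fun n =>
    Icc (0:ℝ) 2 ∩ ⋂ (y : ℝ), ⋂ (_ : (n:ℝ) ≤ y), {w : ℝ | |h (y + w) - h y| ≤ ε/2} with hE
  have hEclosed : ∀ n, IsClosed (E n) := by
    intro n
    refine isClosed_Icc.inter (isClosed_iInter fun y => isClosed_iInter fun _ => ?_)
    have : Continuous fun w : ℝ => |h (y + w) - h y| :=
      ((hc.comp (continuous_const.add continuous_id)).sub continuous_const).abs
    exact isClosed_le this continuous_const
  have hEmem : ∀ n w, w ∈ E n ↔ w ∈ Icc (0:ℝ) 2 ∧ ∀ y : ℝ, (n:ℝ) ≤ y → |h (y + w) - h y| ≤ ε/2 := by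
    intro n w
    simp [hE, Set.mem_iInter]
  have hEmono : Monotone E := by
    intro n m hnm w hw
    rw [hEmem] at hw ⊢
    exact ⟨hw.1, fun y hy => hw.2 y (le_trans (by exact_mod_cast Nat.cast_le.mpr hnm) hy)⟩
  have hEunion : (⋃ n, E n) = Icc (0:ℝ) 2 := by
    apply Set.Subset.antisymm
    · exact Set.iUnion_subset fun n w hw => ((hEmem n w).mp hw).1
    · intro w hw
      have h2 : ∀ᶠ y in atTop, |h (y + w) - h y| ≤ ε/2 := by
        have := Metric.tendsto_nhds.mp (hlim w) (ε/2) (by positivity)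
        filter_upwards [this] with y hy
        rw [Real.dist_eq, sub_zero] at hy
        exact hy.le
      obtain ⟨N, hN⟩ := eventually_atTop.mp h2
      refine Set.mem_iUnion.mpr ⟨⌈max N 0⌉₊, (hEmem _ w).mpr ⟨hw, fun y hy => ?_⟩⟩
      refine hN y (le_trans (le_trans (le_max_left N 0) (Nat.le_ceil _)) hy)
  -- measure of E n tends to volume of Icc 0 2
  have htend : Tendsto (fun n => volume (E n)) atTop (𝓝 (ENNReal.ofReal 2)) := by
    have := tendsto_measure_iUnion_atTop (μ := volume) hEmono
    rwa [hEunion, Real.volume_Icc, show (2:ℝ) - 0 = 2 by norm_num] at this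
  have hev : ∀ᶠ n in atTop, ENNReal.ofReal (7/4) < volume (E n) :=
    htend.eventually_const_lt (by norm_num [ENNReal.ofReal_lt_ofReal_iff])
  obtain ⟨N, hN⟩ := hev.exists
  refine ⟨N, fun y hy v hv => ?_⟩
  -- find w ∈ E N with w - v ∈ E N
  set S₁ : Set ℝ := E N ∩ Icc v 2 with hS₁
  set S₂ : Set ℝ := (fun w => w + (-v)) ⁻¹' (E N ∩ Icc 0 (2 - v)) with hS₂
  have hS₂vol : volume S₂ = volume (E N ∩ Icc 0 (2 - v)) :=
    measure_preimage_add_right volume (-v) _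
  have hS₂sub : S₂ ⊆ Icc v 2 := by
    intro w hw
    have := hw.2
    simp only [Set.mem_Icc] at this ⊢
    constructor <;> linarith [this.1, this.2]
  have hS₁sub : S₁ ⊆ Icc v 2 := Set.inter_subset_right
  have hvol1 : volume (E N) ≤ volume S₁ + ENNReal.ofReal v := by
    have hsub : E N ⊆ S₁ ∪ Icc 0 v := by
      intro w hw
      rcases le_or_gt v w with hvw | hvw
      · exact Or.inl ⟨hw, hvw, (((hEmem N w).mp hw).1).2⟩
      · exact Or.inr ⟨(((hEmem N w).mp hw).1).1, hvw.le⟩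
    calc volume (E N) ≤ volume (S₁ ∪ Icc 0 v) := measure_mono hsub
      _ ≤ volume S₁ + volume (Icc 0 v) := measure_union_le _ _
      _ = volume S₁ + ENNReal.ofReal v := by rw [Real.volume_Icc, sub_zero]
  have hvol2 : volume (E N) ≤ volume S₂ + ENNReal.ofReal v := by
    have hsub : E N ⊆ (E N ∩ Icc 0 (2 - v)) ∪ Icc (2-v) 2 := by
      intro w hw
      rcases le_or_gt w (2 - v) with hvw | hvw
      · exact Or.inl ⟨hw, (((hEmem N w).mp hw).1).1, hvw⟩
      · exact Or.inr ⟨hvw.le, (((hEmem N w).mp hw).1).2⟩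
    calc volume (E N) ≤ volume ((E N ∩ Icc 0 (2 - v)) ∪ Icc (2-v) 2) := measure_mono hsub
      _ ≤ volume (E N ∩ Icc 0 (2 - v)) + volume (Icc (2-v) 2) := measure_union_le _ _
      _ = volume S₂ + ENNReal.ofReal v := by
          rw [hS₂vol, Real.volume_Icc, show (2:ℝ) - (2 - v) = v by ring]
  have hnonempty : (S₁ ∩ S₂).Nonempty := by
    by_contra hcon
    rw [Set.not_nonempty_iff_eq_empty] at hcon
    have hdisj : Disjoint S₁ S₂ := Set.disjoint_iff_inter_eq_empty.mpr hcon
    have hS₂meas : MeasurableSet S₂ :=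
      (measurable_add_const (-v)) ((hEclosed N).measurableSet.inter measurableSet_Icc)
    have hun : volume (S₁ ∪ S₂) = volume S₁ + volume S₂ := measure_union hdisj hS₂meas
    have hle : volume S₁ + volume S₂ ≤ ENNReal.ofReal (2 - v) := by
      rw [← hun, ← Real.volume_Icc (a := v) (b := 2)]
      exact measure_mono (Set.union_subset hS₁sub hS₂sub)
    have hge : ENNReal.ofReal (7/4) + ENNReal.ofReal (7/4)
        < (volume S₁ + ENNReal.ofReal v) + (volume S₂ + ENNReal.ofReal v) := by
      have h1 := lt_of_lt_of_le hN hvol1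
      have h2 := lt_of_lt_of_le hN hvol2
      exact ENNReal.add_lt_add h1 h2
    have : (volume S₁ + ENNReal.ofReal v) + (volume S₂ + ENNReal.ofReal v)
        ≤ ENNReal.ofReal (2 - v) + ENNReal.ofReal v + ENNReal.ofReal v := by
      calc (volume S₁ + ENNReal.ofReal v) + (volume S₂ + ENNReal.ofReal v)
          = (volume S₁ + volume S₂) + ENNReal.ofReal v + ENNReal.ofReal v := by ring
        _ ≤ ENNReal.ofReal (2 - v) + ENNReal.ofReal v + ENNReal.ofReal v := by
            gcongr
    have hfin : ENNReal.ofReal (7/4) + ENNReal.ofReal (7/4)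
        < ENNReal.ofReal (2 - v) + ENNReal.ofReal v + ENNReal.ofReal v :=
      lt_of_lt_of_le hge this
    rw [← ENNReal.ofReal_add (by norm_num) (by norm_num),
      ← ENNReal.ofReal_add (by linarith [hv.2]) hv.1, ← ENNReal.ofReal_add
        (by linarith [hv.1, hv.2]) hv.1] at hfin
    rw [ENNReal.ofReal_lt_ofReal_iff (by linarith [hv.1])] at hfin
    linarith [hv.2]
  obtain ⟨w, hw₁, hw₂⟩ := hnonempty
  have hwE : w ∈ E N := hw₁.1
  have hwvE : w - v ∈ E N := by
    have := hw₂
    simp only [hS₂, Set.mem_preimage] at this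
    have : w + -v ∈ E N := this.1
    simpa [sub_eq_add_neg] using this
  have key1 : |h (y + w) - h y| ≤ ε/2 := ((hEmem N w).mp hwE).2 y hy
  have key2 : |h ((y + v) + (w - v)) - h (y + v)| ≤ ε/2 :=
    ((hEmem N (w - v)).mp hwvE).2 (y + v) (by linarith [hv.1])
  have heq : (y + v) + (w - v) = y + w := by ring
  rw [heq] at key2
  calc |h (y + v) - h y| = |(h (y + w) - h y) - (h (y + w) - h (y + v))| := by ring_nf
    _ ≤ |h (y + w) - h y| + |h (y + w) - h (y + v)| := abs_sub _ _
    _ ≤ ε/2 + ε/2 := add_le_add key1 key2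
    _ = ε := by ring

lemma chain (h : ℝ → ℝ) (N ε : ℝ) (hε : 0 ≤ ε)
    (H : ∀ y ≥ N, ∀ v ∈ Set.Icc (0:ℝ) 1, |h (y + v) - h y| ≤ ε) :
    ∀ y ≥ N, ∀ v ≥ (0:ℝ), |h (y + v) - h y| ≤ ε * (v + 1) := by
  have main : ∀ n : ℕ, ∀ v : ℝ, 0 ≤ v → v ≤ n + 1 → ∀ y ≥ N,
      |h (y + v) - h y| ≤ ε * (n + 1) := by
    intro n
    induction n with
    | zero =>
      intro v hv0 hv1 y hy
      have : v ≤ 1 := by push_cast at hv1; linarith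
      simpa using H y hy v ⟨hv0, this⟩
    | succ n ih =>
      intro v hv0 hv1 y hy
      rcases le_or_gt v (n + 1) with hcase | hcase
      · have := ih v hv0 hcase y hy
        have : |h (y + v) - h y| ≤ ε * (n + 1) := this
        calc |h (y + v) - h y| ≤ ε * (n + 1) := this
          _ ≤ ε * ((n + 1 : ℕ) + 1) := by push_cast; nlinarith
      · have h1 : |h ((y + 1) + (v - 1)) - h (y + 1)| ≤ ε * (n + 1) := by
          refine ih (v - 1) (by linarith) (by push_cast at hv1 ⊢; linarith) (y + 1) (by linarith)
        have h2 : |h (y + 1) - h y| ≤ ε := H y hy 1 ⟨by norm_num, le_refl 1⟩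
        have heq : (y + 1) + (v - 1) = y + v := by ring
        rw [heq] at h1
        calc |h (y + v) - h y|
            = |(h (y + v) - h (y + 1)) + (h (y + 1) - h y)| := by ring_nf
          _ ≤ |h (y + v) - h (y + 1)| + |h (y + 1) - h y| := abs_add_le _ _
          _ ≤ ε * (n + 1) + ε := add_le_add h1 h2
          _ = ε * ((n + 1 : ℕ) + 1) := by push_cast; ring
  intro y hy v hv
  have hfloor : v ≤ (⌊v⌋₊ : ℝ) + 1 := (Nat.lt_floor_add_one v).le
  have := main ⌊v⌋₊ v hv hfloor y hy
  calc |h (y + v) - h y| ≤ ε * (⌊v⌋₊ + 1) := this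
    _ ≤ ε * (v + 1) := by
        have := Nat.floor_le hv
        nlinarith

/-- Potter-type bound at 0. -/
lemma potter (σ : ℝ → ℝ) (hσcont : ContinuousOn σ (Set.Ici 0))
    (hσpos : ∀ t > (0:ℝ), 0 < σ t)
    (lam : ℝ) (hlam : lam ∈ Set.Ioo (0:ℝ) 1)
    (hL1 : ∀ t > (0:ℝ), Tendsto (fun x => σ (t * x) / σ x) (𝓝[>] 0) (𝓝 (t ^ lam)))
    (M : ℝ) (hM : 0 ≤ M) :
    ∃ K₀ > (0:ℝ), ∃ xb > (0:ℝ), ∀ x, 0 < x → x ≤ xb → ∀ u, 0 < u → u ≤ rexp M →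
      σ (u * x) ≤ K₀ * σ x * u ^ (lam / 2) := by
  have hσexp : ∀ y : ℝ, 0 < σ (rexp (-y)) := fun y => hσpos _ (exp_pos _)
  set g : ℝ → ℝ := fun y => Real.log (σ (rexp (-y))) + lam * y with hg
  have hgc : Continuous g := by
    have h1 : Continuous fun y : ℝ => σ (rexp (-y)) := by
      rw [continuous_iff_continuousAt]
      intro y
      have hσa : ContinuousAt σ (rexp (-y)) :=
        hσcont.continuousAt (Ici_mem_nhds (exp_pos _))
      have hexp : Continuous fun y : ℝ => rexp (-y) := by fun_prop
      exact ContinuousAt.comp hσa hexp.continuousAt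
    have h2 : Continuous fun y : ℝ => Real.log (σ (rexp (-y))) := by
      rw [continuous_iff_continuousAt]
      intro y
      exact ContinuousAt.comp (g := Real.log)
        (Real.continuousAt_log (ne_of_gt (hσexp y))) h1.continuousAt
    exact h2.add (continuous_const.mul continuous_id)
  have hglim : ∀ v : ℝ, Tendsto (fun y => g (y + v) - g y) atTop (𝓝 0) := by
    intro v
    have ht : (0:ℝ) < rexp (-v) := exp_pos _
    have hx : Tendsto (fun y : ℝ => rexp (-y)) atTop (𝓝[>] 0) := by
      apply tendsto_nhdsWithin_of_tendsto_nhds_of_eventually_within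
      · exact Real.tendsto_exp_atBot.comp tendsto_neg_atTop_atBot
      · exact Filter.Eventually.of_forall fun y => exp_pos _
    have hcomp : Tendsto (fun y : ℝ => σ (rexp (-v) * rexp (-y)) / σ (rexp (-y)))
        atTop (𝓝 ((rexp (-v)) ^ lam)) := (hL1 _ ht).comp hx
    have hlog : Tendsto (fun y : ℝ => Real.log (σ (rexp (-v) * rexp (-y)) / σ (rexp (-y))))
        atTop (𝓝 (Real.log ((rexp (-v)) ^ lam))) :=
      (Real.continuousAt_log (ne_of_gt (Real.rpow_pos_of_pos ht _))).tendsto.comp hcomp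
    have hlogval : Real.log ((rexp (-v)) ^ lam) = -(lam * v) := by
      rw [Real.log_rpow ht, Real.log_exp]; ring
    rw [hlogval] at hlog
    have hfin := hlog.add_const (lam * v)
    rw [neg_add_cancel] at hfin
    apply hfin.congr
    intro y
    have hprod : rexp (-v) * rexp (-y) = rexp (-(y + v)) := by
      rw [← Real.exp_add]; ring_nf
    rw [hprod, Real.log_div (ne_of_gt (hσexp (y + v))) (ne_of_gt (hσexp y))]
    simp only [hg]
    ring
  obtain ⟨N, hN⟩ := uct g hgc hglim (lam / 2) (by linarith [hlam.1])
  have hchain := chain g N (lam / 2) (by linarith [hlam.1]) hN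
  refine ⟨rexp (lam / 2 * (M + 1) + lam * M), exp_pos _, rexp (-(N + M)), exp_pos _,
    fun x hx hxb u hu huM => ?_⟩
  set y : ℝ := -Real.log x with hy
  set v : ℝ := -Real.log u with hv
  have hxe : x = rexp (-y) := by rw [hy, neg_neg, Real.exp_log hx]
  have hue : u = rexp (-v) := by rw [hv, neg_neg, Real.exp_log hu]
  have hyN : y ≥ N + M := by
    have : Real.log x ≤ -(N + M) := by
      calc Real.log x ≤ Real.log (rexp (-(N + M))) := Real.log_le_log hx hxb
        _ = -(N + M) := Real.log_exp _
    linarith [this]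
  have hvM : v ≥ -M := by
    have : Real.log u ≤ M := by
      calc Real.log u ≤ Real.log (rexp M) := Real.log_le_log hu huM
        _ = M := Real.log_exp _
    simp only [hv]; linarith
  -- key exponent bound
  have hkey : g (y + v) - g y ≤ (lam / 2 * (M + 1) + lam * M) - (lam / 2) * v + lam * v := by
    rcases le_or_gt 0 v with hv0 | hv0
    · have := hchain y (by linarith) v hv0
      have h1 : g (y + v) - g y ≤ lam / 2 * (v + 1) := (abs_le.mp this).2
      nlinarith [hlam.1.le, hvM, hM]
    · have hyv : y + v ≥ N := by linarith
      have h3 := hchain (y + v) hyv (-v) (by linarith)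
      rw [show (y + v) + -v = y by ring] at h3
      have h4 := (abs_le.mp h3).1
      have h2 : g (y + v) - g y ≤ lam / 2 * (-v + 1) := by linarith
      nlinarith [hlam.1.le, hvM, hM]
  -- convert to multiplicative bound
  have hux : u * x = rexp (-(y + v)) := by
    rw [hxe, hue, ← Real.exp_add]; ring_nf
  have hσux : σ (u * x) = rexp (g (y + v) - lam * (y + v)) := by
    rw [hux]
    rw [hg]
    simp only
    rw [show g (y + v) - lam * (y + v) = Real.log (σ (rexp (-(y + v)))) by simp [hg]]
    rw [Real.exp_log (hσexp _)]
  have hσx : σ x = rexp (g y - lam * y) := by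
    rw [hxe, show g y - lam * y = Real.log (σ (rexp (-y))) by simp [hg],
      Real.exp_log (hσexp _)]
  have hupow : u ^ (lam / 2) = rexp (-(lam / 2) * v) := by
    rw [Real.rpow_def_of_pos hu]
    congr 1
    have hlogu : Real.log u = -v := by rw [hv]; ring
    rw [hlogu]; ring
  rw [hσux, hσx, hupow, ← Real.exp_add, ← Real.exp_add]
  rw [Real.exp_le_exp]
  linarith [hkey]

end Aux

set_option maxHeartbeats 1000000

/-- **Hölder-type second-moment bound for increments of the scaled Gaussian input.**
Under L1 and L2, for every `T > 0` there exist `K > 0`, `γ ∈ (0,1)` and `x̄ > 0` such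
that for all `x ∈ (0, x̄]` and `s₁, t₁, s₂, t₂ ∈ [−T,T]`:
`E[((J(xt₁) − J(xs₁))/σ(x) − (J(xt₂) − J(xs₂))/σ(x))²]
  ≤ K (|s₁−s₂|² + |t₁−t₂|²)^γ`. -/
theorem holder_second_moment_bound
    {Ω : Type*} [MeasurableSpace Ω] (P : Measure Ω) [IsProbabilityMeasure P]
    (σ : ℝ → ℝ) (hσcont : ContinuousOn σ (Set.Ici 0)) (hσ0 : σ 0 = 0)
    (hσpos : ∀ t > (0:ℝ), 0 < σ t)
    (J : ℝ → Ω → ℝ) (hJcont : ∀ ω, Continuous fun t => J t ω)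
    (hJ0 : ∀ ω, J 0 ω = 0)
    (hJgauss : IsCenteredGaussian1 P J (covFromStd σ))
    -- assumption L1
    (lam : ℝ) (hlam : lam ∈ Set.Ioo (0:ℝ) 1)
    (hL1 : ∀ t > (0:ℝ), Tendsto (fun x => σ (t * x) / σ x) (𝓝[>] 0) (𝓝 (t ^ lam)))
    -- assumption L2
    (t₀ β C : ℝ) (ht₀ : 0 < t₀) (hβ : β ∈ Set.Ioo (0:ℝ) 1) (hC : 0 < C)
    (hL2 : ∀ t > t₀, σ t ≤ C * t ^ β) :
    ∀ T > (0:ℝ), ∃ K γ xbar : ℝ, 0 < K ∧ γ ∈ Set.Ioo (0:ℝ) 1 ∧ 0 < xbar ∧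
      ∀ x, 0 < x → x ≤ xbar →
        ∀ s₁ ∈ Set.Icc (-T) T, ∀ t₁ ∈ Set.Icc (-T) T,
          ∀ s₂ ∈ Set.Icc (-T) T, ∀ t₂ ∈ Set.Icc (-T) T,
            ∫ ω, ((J (x * t₁) ω - J (x * s₁) ω) / σ x
                - (J (x * t₂) ω - J (x * s₂) ω) / σ x) ^ 2 ∂P
              ≤ K * (|s₁ - s₂| ^ 2 + |t₁ - t₂| ^ 2) ^ γ := by
  intro T hT
  set M : ℝ := max 0 (Real.log (2 * T)) with hM
  have hM0 : 0 ≤ M := le_max_left _ _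
  obtain ⟨K₀, hK₀, xb, hxbpos, hpotter⟩ := potter σ hσcont hσpos lam hlam hL1 M hM0
  have hlam0 : 0 < lam := hlam.1
  have hlam1 : lam < 1 := hlam.2
  refine ⟨4 * K₀ ^ 2, lam / 2, xb, by positivity, ⟨by linarith, by linarith⟩, hxbpos, ?_⟩
  intro x hx hxle s₁ hs₁ t₁ ht₁ s₂ hs₂ t₂ ht₂
  have hσx : (0:ℝ) < σ x := hσpos x hx
  have h2T : (0:ℝ) < 2 * T := by linarith
  have h2TM : 2 * T ≤ Real.exp M := by
    calc 2 * T = Real.exp (Real.log (2 * T)) := (Real.exp_log h2T).symm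
      _ ≤ Real.exp M := Real.exp_le_exp.mpr (le_max_right _ _)
  -- the Potter-type bound, squared and divided by σ x ^ 2
  have hbound : ∀ u : ℝ, 0 ≤ u → u ≤ 2 * T →
      σ (x * u) ^ 2 / σ x ^ 2 ≤ K₀ ^ 2 * (u ^ 2) ^ (lam / 2) := by
    intro u hu0 hu2T
    rcases eq_or_lt_of_le hu0 with hu | hu
    · rw [← hu]
      rw [mul_zero, hσ0]
      have : ((0:ℝ) ^ 2) ^ (lam / 2) = 0 := by
        rw [show ((0:ℝ) ^ 2) = (0:ℝ) by norm_num, Real.zero_rpow (by positivity)]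
      rw [this]
      simp
    · have h1 : σ (u * x) ≤ K₀ * σ x * u ^ (lam / 2) := hpotter x hx hxle u hu
        (le_trans hu2T h2TM)
      rw [mul_comm u x] at h1
      have hrpow_nonneg : (0:ℝ) ≤ u ^ (lam / 2) := Real.rpow_nonneg hu.le _
      have hLnn : 0 ≤ σ (x * u) := (hσpos _ (by positivity)).le
      have h2 : σ (x * u) ^ 2 ≤ (K₀ * σ x * u ^ (lam / 2)) ^ 2 := by
        apply pow_le_pow_left₀ hLnn h1
      have h3 : (u ^ (lam / 2)) ^ 2 = (u ^ 2) ^ (lam / 2) := by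
        rw [← Real.rpow_natCast (u ^ (lam / 2)) 2, ← Real.rpow_natCast u 2,
          ← Real.rpow_mul hu.le, ← Real.rpow_mul hu.le]
        congr 1
        push_cast
        ring
      rw [div_le_iff₀ (by positivity)]
      calc σ (x * u) ^ 2 ≤ (K₀ * σ x * u ^ (lam / 2)) ^ 2 := h2
        _ = K₀ ^ 2 * (u ^ 2) ^ (lam / 2) * σ x ^ 2 := by rw [mul_pow, mul_pow, h3]; ring
  -- second moments of the two "increments"
  have hA := second_moment_increment P σ hσ0 J hJgauss (x * t₁) (x * t₂) (σ x) hσx.ne'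
  have hB := second_moment_increment P σ hσ0 J hJgauss (x * s₁) (x * s₂) (σ x) hσx.ne'
  set a : ℝ := |t₁ - t₂| with ha
  set b : ℝ := |s₁ - s₂| with hb
  have haT : a ≤ 2 * T := by
    rw [ha]
    have h1 := abs_sub_abs_le_abs_sub t₁ t₂
    have h2 : |t₁| ≤ T := abs_le.mpr ⟨ht₁.1, ht₁.2⟩
    have h3 : |t₂| ≤ T := abs_le.mpr ⟨ht₂.1, ht₂.2⟩
    calc |t₁ - t₂| ≤ |t₁| + |t₂| := abs_sub _ _
      _ ≤ 2 * T := by linarith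
  have hbT : b ≤ 2 * T := by
    rw [hb]
    have h2 : |s₁| ≤ T := abs_le.mpr ⟨hs₁.1, hs₁.2⟩
    have h3 : |s₂| ≤ T := abs_le.mpr ⟨hs₂.1, hs₂.2⟩
    calc |s₁ - s₂| ≤ |s₁| + |s₂| := abs_sub _ _
      _ ≤ 2 * T := by linarith
  have habs1 : |x * t₁ - x * t₂| = x * a := by
    rw [ha, ← mul_sub, abs_mul, abs_of_pos hx]
  have habs2 : |x * s₁ - x * s₂| = x * b := by
    rw [hb, ← mul_sub, abs_mul, abs_of_pos hx]
  rw [habs1] at hA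
  rw [habs2] at hB
  -- integrability of the full increment difference
  have hD := (gauss_sq_moment P J (covFromStd σ) hJgauss 4
    ![x * t₁, x * s₁, x * t₂, x * s₂]
    ![(σ x)⁻¹, -(σ x)⁻¹, -(σ x)⁻¹, (σ x)⁻¹]).1
  have hDfun : (fun ω => (∑ i, (![(σ x)⁻¹, -(σ x)⁻¹, -(σ x)⁻¹, (σ x)⁻¹] : Fin 4 → ℝ) i
        * J ((![x * t₁, x * s₁, x * t₂, x * s₂] : Fin 4 → ℝ) i) ω) ^ 2)
      = fun ω => ((J (x * t₁) ω - J (x * s₁) ω) / σ x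
        - (J (x * t₂) ω - J (x * s₂) ω) / σ x) ^ 2 := by
    funext ω
    simp only [Fin.sum_univ_four, Matrix.cons_val_zero, Matrix.cons_val_one, Matrix.head_cons,
      Matrix.cons_val_two, Matrix.tail_cons, Matrix.cons_val_three]
    field_simp
    ring
  rw [hDfun] at hD
  -- pointwise bound and integral comparison
  have hptwise : ∀ ω, ((J (x * t₁) ω - J (x * s₁) ω) / σ x
        - (J (x * t₂) ω - J (x * s₂) ω) / σ x) ^ 2
      ≤ 2 * ((J (x * t₁) ω - J (x * t₂) ω) / σ x) ^ 2
        + 2 * ((J (x * s₁) ω - J (x * s₂) ω) / σ x) ^ 2 := by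
    intro ω
    have hrw : (J (x * t₁) ω - J (x * s₁) ω) / σ x - (J (x * t₂) ω - J (x * s₂) ω) / σ x
        = (J (x * t₁) ω - J (x * t₂) ω) / σ x - (J (x * s₁) ω - J (x * s₂) ω) / σ x := by
      field_simp
      ring
    rw [hrw]
    set A := (J (x * t₁) ω - J (x * t₂) ω) / σ x
    set B := (J (x * s₁) ω - J (x * s₂) ω) / σ x
    nlinarith [sq_nonneg (A + B)]
  have hintRHS : Integrable (fun ω => 2 * ((J (x * t₁) ω - J (x * t₂) ω) / σ x) ^ 2
      + 2 * ((J (x * s₁) ω - J (x * s₂) ω) / σ x) ^ 2) P :=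
    (hA.1.const_mul 2).add (hB.1.const_mul 2)
  have hstep1 : ∫ ω, ((J (x * t₁) ω - J (x * s₁) ω) / σ x
        - (J (x * t₂) ω - J (x * s₂) ω) / σ x) ^ 2 ∂P
      ≤ ∫ ω, (2 * ((J (x * t₁) ω - J (x * t₂) ω) / σ x) ^ 2
        + 2 * ((J (x * s₁) ω - J (x * s₂) ω) / σ x) ^ 2) ∂P :=
    integral_mono hD hintRHS hptwise
  have hstep2 : ∫ ω, (2 * ((J (x * t₁) ω - J (x * t₂) ω) / σ x) ^ 2
        + 2 * ((J (x * s₁) ω - J (x * s₂) ω) / σ x) ^ 2) ∂P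
      = 2 * (σ (x * a) ^ 2 / σ x ^ 2) + 2 * (σ (x * b) ^ 2 / σ x ^ 2) := by
    rw [integral_add (hA.1.const_mul 2) (hB.1.const_mul 2),
      MeasureTheory.integral_const_mul, MeasureTheory.integral_const_mul, hA.2, hB.2]
  have hfinal1 : 2 * (σ (x * a) ^ 2 / σ x ^ 2) + 2 * (σ (x * b) ^ 2 / σ x ^ 2)
      ≤ 2 * (K₀ ^ 2 * (a ^ 2) ^ (lam / 2)) + 2 * (K₀ ^ 2 * (b ^ 2) ^ (lam / 2)) := by
    have h1 := hbound a (abs_nonneg _) haT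
    have h2 := hbound b (abs_nonneg _) hbT
    linarith
  have hmono : ∀ c d : ℝ, (c ^ 2) ^ (lam / 2) ≤ (d ^ 2 + c ^ 2) ^ (lam / 2) := by
    intro c d
    exact Real.rpow_le_rpow (sq_nonneg c) (by nlinarith [sq_nonneg d]) (by positivity)
  have hfinal2 : 2 * (K₀ ^ 2 * (a ^ 2) ^ (lam / 2)) + 2 * (K₀ ^ 2 * (b ^ 2) ^ (lam / 2))
      ≤ 4 * K₀ ^ 2 * (b ^ 2 + a ^ 2) ^ (lam / 2) := by
    have h1 := hmono a b
    have h2 : (b ^ 2) ^ (lam / 2) ≤ (b ^ 2 + a ^ 2) ^ (lam / 2) :=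
      Real.rpow_le_rpow (sq_nonneg b) (by nlinarith [sq_nonneg a]) (by positivity)
    have h3 := mul_le_mul_of_nonneg_left (add_le_add h1 h2)
      (show (0:ℝ) ≤ 2 * K₀ ^ 2 by positivity)
    linarith
  calc ∫ ω, ((J (x * t₁) ω - J (x * s₁) ω) / σ x
        - (J (x * t₂) ω - J (x * s₂) ω) / σ x) ^ 2 ∂P
      ≤ 2 * (σ (x * a) ^ 2 / σ x ^ 2) + 2 * (σ (x * b) ^ 2 / σ x ^ 2) := by
        rw [← hstep2]; exact hstep1
    _ ≤ 2 * (K₀ ^ 2 * (a ^ 2) ^ (lam / 2)) + 2 * (K₀ ^ 2 * (b ^ 2) ^ (lam / 2)) := hfinal1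
    _ ≤ 4 * K₀ ^ 2 * (b ^ 2 + a ^ 2) ^ (lam / 2) := hfinal2
    _ = 4 * K₀ ^ 2 * (|s₁ - s₂| ^ 2 + |t₁ - t₂| ^ 2) ^ (lam / 2) := by rw [ha, hb]
end
end

section
/- Tightness (asymptotic equicontinuity) of the scaled Gaussian input. Assume σ satisfies L1 and L2, and let δ : (0,∞) → (0,∞) satisfy u δ(u) = σ(δ(u)) for all large u and δ(u) → 0 as u → ∞. Then for every T > 0 and every η > 0: lim_{ζ↓0} limsup_{u→∞} ℙ( sup_{ s,t ∈ [−T,T], |t−s| ≤ ζ } | (J(δ(u)t) − J(δ(u)s))/σ(δ(u)) | ≥ η ) = 0. -/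
open MeasureTheory ProbabilityTheory Filter Topology

noncomputable section

lemma aux_exp_neg_le {x : ℝ} (hx : 0 < x) (k : ℕ) :
    Real.exp (-x) ≤ (Nat.factorial k : ℝ) / x ^ k := by
  have h1 : x ^ k / (Nat.factorial k : ℝ) ≤ Real.exp x := by
    calc x ^ k / (Nat.factorial k : ℝ)
        ≤ ∑ i ∈ Finset.range (k + 1), x ^ i / (Nat.factorial i : ℝ) := by
          refine Finset.single_le_sum (f := fun i => x ^ i / (Nat.factorial i : ℝ))
            (fun i _ => by positivity) (Finset.self_mem_range_succ k)
      _ ≤ Real.exp x := Real.sum_le_exp_of_nonneg hx.le _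
  have hpos : 0 < x ^ k / (Nat.factorial k : ℝ) := by positivity
  rw [Real.exp_neg]
  calc (Real.exp x)⁻¹ ≤ (x ^ k / (Nat.factorial k : ℝ))⁻¹ := by
        exact inv_anti₀ hpos h1
    _ = (Nat.factorial k : ℝ) / x ^ k := by rw [inv_div]

lemma aux_gauss_tail {v : NNReal} {a s : ℝ} (ha : 0 < a) (hs : 0 < s)
    (hvs : Real.sqrt v ≤ s) :
    (gaussianReal 0 v) {x | a ≤ |x|} ≤
      ENNReal.ofReal (2 * (s / a) * Real.exp (-a ^ 2 / (2 * s ^ 2))) := by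
  have hmeas : MeasurableSet {x : ℝ | a ≤ |x|} :=
    measurableSet_le measurable_const measurable_abs
  rcases eq_or_ne v 0 with hv | hv
  · subst hv
    rw [gaussianReal_zero_var, Measure.dirac_apply' _ hmeas]
    have h0 : (0:ℝ) ∉ {x : ℝ | a ≤ |x|} := by simp [abs_of_nonneg, ha.not_ge]
    simp [Set.indicator_of_notMem h0]
  · have hv0 : (0:ℝ) < (v:ℝ) := by positivity
    set b : ℝ := a / (2 * (v:ℝ)) with hb_def
    have hb : 0 < b := by positivity
    set μg := gaussianReal 0 v with hμ_def
    have hnegmap : μg.map (fun x => -x) = μg := by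
      have h := gaussianReal_map_const_mul (μ := 0) (v := v) (-1)
      rw [hμ_def, show (fun x : ℝ => -x) = ((-1:ℝ) * ·) from by funext x; ring, h]
      norm_num
    have hIic : μg (Set.Iic (-a)) = μg (Set.Ici a) := by
      conv_lhs => rw [← hnegmap]
      rw [Measure.map_apply measurable_neg measurableSet_Iic]
      congr 1
      ext x
      simp [neg_le]
    have hcore : μg (Set.Ici a) ≤
        ENNReal.ofReal ((Real.sqrt (2 * Real.pi * v))⁻¹ * (b⁻¹ * Real.exp (-(b * a)))) := by
      rw [hμ_def, gaussianReal_apply 0 hv]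
      have hle : ∫⁻ x in Set.Ici a, gaussianPDF 0 v x ≤
          ∫⁻ x in Set.Ici a, ENNReal.ofReal
            ((Real.sqrt (2 * Real.pi * v))⁻¹ * Real.exp (-(b * x))) := by
        refine setLIntegral_mono ?_ (fun x hx => ?_)
        · refine Measurable.ennreal_ofReal ?_
          exact (measurable_const.mul ((measurable_id.const_mul b).neg.exp))
        · rw [gaussianPDF]
          refine ENNReal.ofReal_le_ofReal ?_
          rw [gaussianPDFReal]
          refine mul_le_mul_of_nonneg_left ?_ (by positivity)
          have hx' : a ≤ x := hx
          have hax : 0 < x := lt_of_lt_of_le ha hx'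
          rw [Real.exp_le_exp, sub_zero, hb_def,
            show a / (2 * (v:ℝ)) * x = a * x / (2 * (v:ℝ)) from by ring,
            neg_div, neg_le_neg_iff]
          gcongr
          nlinarith
      refine hle.trans ?_
      have hint : IntegrableOn
          (fun x => (Real.sqrt (2 * Real.pi * v))⁻¹ * Real.exp (-(b * x))) (Set.Ici a) := by
        rw [integrableOn_Ici_iff_integrableOn_Ioi]
        have h := (exp_neg_integrableOn_Ioi a hb).const_mul (Real.sqrt (2 * Real.pi * v))⁻¹
        simp only [neg_mul] at h; exact h
      rw [← ofReal_integral_eq_lintegral_ofReal hint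
        (Filter.Eventually.of_forall (fun x => by positivity))]
      refine ENNReal.ofReal_le_ofReal ?_
      rw [MeasureTheory.integral_const_mul]
      refine mul_le_mul_of_nonneg_left ?_ (by positivity)
      rw [MeasureTheory.integral_Ici_eq_integral_Ioi]
      have hsub := integral_comp_mul_left_Ioi (fun y => Real.exp (-y)) a hb
      simp only [smul_eq_mul] at hsub
      rw [hsub, integral_exp_neg_Ioi]
    have hsplit : μg {x | a ≤ |x|} ≤ μg (Set.Iic (-a)) + μg (Set.Ici a) := by
      refine le_trans (measure_mono ?_) (measure_union_le _ _)
      intro x hx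
      have hx' : a ≤ |x| := hx
      rcases le_abs.mp hx' with h | h
      · exact Or.inr h
      · exact Or.inl (by simpa [le_neg] using h)
    have h2 : μg {x | a ≤ |x|} ≤ 2 * μg (Set.Ici a) := by
      rw [two_mul]
      exact hsplit.trans (by rw [hIic])
    refine h2.trans ?_
    refine le_trans (mul_le_mul_right hcore 2) ?_
    rw [show (2:ENNReal) = ENNReal.ofReal (2:ℝ) from by norm_num,
      ← ENNReal.ofReal_mul (by norm_num)]
    refine ENNReal.ofReal_le_ofReal ?_
    have hsq2pi : (2:ℝ) ≤ Real.sqrt (2 * Real.pi) := by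
      have h4 : (4:ℝ) ≤ 2 * Real.pi := by nlinarith [Real.pi_gt_three]
      nlinarith [Real.sq_sqrt (show (0:ℝ) ≤ 2 * Real.pi from by positivity),
        Real.sqrt_nonneg (2 * Real.pi)]
    have hsv : 0 < Real.sqrt v := Real.sqrt_pos.mpr hv0
    have hss : Real.sqrt v * Real.sqrt v = (v:ℝ) := Real.mul_self_sqrt (by positivity)
    have hsplit2 : Real.sqrt (2 * Real.pi * v) = Real.sqrt (2 * Real.pi) * Real.sqrt v :=
      Real.sqrt_mul (by positivity) _
    have hCb : (Real.sqrt (2 * Real.pi * v))⁻¹ * b⁻¹ ≤ s / a := by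
      rw [hb_def, inv_div, hsplit2,
        show (Real.sqrt (2 * Real.pi) * Real.sqrt v)⁻¹ * (2 * (v:ℝ) / a)
          = ((Real.sqrt (2 * Real.pi) * Real.sqrt v)⁻¹ * (2 * (v:ℝ))) / a from by ring]
      gcongr
      rw [inv_mul_le_iff₀ (by positivity)]
      have hkey : 2 * (v:ℝ) ≤ Real.sqrt (2 * Real.pi) * (Real.sqrt v * Real.sqrt v) := by
        nlinarith [mul_nonneg (sub_nonneg.mpr hsq2pi) hv0.le]
      calc 2 * (v:ℝ) ≤ Real.sqrt (2 * Real.pi) * (Real.sqrt v * Real.sqrt v) := hkey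
        _ = Real.sqrt (2 * Real.pi) * Real.sqrt v * Real.sqrt v := by ring
        _ ≤ Real.sqrt (2 * Real.pi) * Real.sqrt v * s := by
            refine mul_le_mul_of_nonneg_left hvs (by positivity)
    have hvle : (v:ℝ) ≤ s ^ 2 := by
      have h := pow_le_pow_left₀ (Real.sqrt_nonneg (v:ℝ)) hvs 2
      rwa [Real.sq_sqrt (by positivity)] at h
    have hexp : Real.exp (-(b * a)) ≤ Real.exp (-a ^ 2 / (2 * s ^ 2)) := by
      rw [Real.exp_le_exp, hb_def,
        show a / (2 * (v:ℝ)) * a = a ^ 2 / (2 * (v:ℝ)) from by ring,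
        neg_div, neg_le_neg_iff]
      exact div_le_div_of_nonneg_left (by positivity) (by positivity) (by linarith)
    calc 2 * ((Real.sqrt (2 * Real.pi * v))⁻¹ * (b⁻¹ * Real.exp (-(b * a))))
        = 2 * ((Real.sqrt (2 * Real.pi * v))⁻¹ * b⁻¹) * Real.exp (-(b * a)) := by ring
      _ ≤ 2 * (s / a) * Real.exp (-a ^ 2 / (2 * s ^ 2)) := by
          refine mul_le_mul (mul_le_mul_of_nonneg_left hCb (by norm_num)) hexp
            (Real.exp_nonneg _) (by positivity)

lemma aux_incr_law {Ω : Type*} [MeasurableSpace Ω] (P : Measure Ω)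
    (σ : ℝ → ℝ) (hσ0 : σ 0 = 0) (J : ℝ → Ω → ℝ)
    (hJ : IsCenteredGaussian1 P J (covFromStd σ)) (b a : ℝ) {r : ℝ} (hr : r ≠ 0) :
    P.map (fun ω => (J b ω - J a ω) / r)
      = gaussianReal 0 ((σ |b - a| ^ 2 / r ^ 2).toNNReal) := by
  have h := hJ.2 2 ![b, a] ![r⁻¹, -r⁻¹]
  have hfun : (fun ω => ∑ i : Fin 2, ![r⁻¹, -r⁻¹] i * J (![b, a] i) ω)
      = fun ω => (J b ω - J a ω) / r := by
    funext ω
    simp [Fin.sum_univ_two]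
    field_simp
    ring
  have hvar : (∑ i : Fin 2, ∑ j : Fin 2,
      ![r⁻¹, -r⁻¹] i * ![r⁻¹, -r⁻¹] j * covFromStd σ (![b, a] i) (![b, a] j))
      = σ |b - a| ^ 2 / r ^ 2 := by
    simp only [Fin.sum_univ_two, Matrix.cons_val_zero, Matrix.cons_val_one, Matrix.head_cons,
      covFromStd, sub_self, abs_zero, hσ0]
    rw [abs_sub_comm a b]
    field_simp
    ring
  rw [hfun, hvar] at h
  exact h

/-- dyadic grid point -/
def gridpt (T : ℝ) (n : ℕ) (k : ℕ) : ℝ := -T + 2 * T * (k : ℝ) / 2 ^ n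

def dyY (T : ℝ) (n : ℕ) (x : ℝ) : ℝ := 2 ^ n * (x + T) / (2 * T)

def dyK (T : ℝ) (n : ℕ) (x : ℝ) : ℕ := ⌊dyY T n x⌋₊

lemma dyY_nonneg {T x : ℝ} (hT : 0 < T) (hx : x ∈ Set.Icc (-T) T) (n : ℕ) :
    0 ≤ dyY T n x := by
  have : 0 ≤ x + T := by linarith [hx.1]
  unfold dyY; positivity

lemma dyY_le {T x : ℝ} (hT : 0 < T) (hx : x ∈ Set.Icc (-T) T) (n : ℕ) :
    dyY T n x ≤ 2 ^ n := by
  unfold dyY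
  rw [div_le_iff₀ (by positivity)]
  have : x + T ≤ 2 * T := by linarith [hx.2]
  exact mul_le_mul_of_nonneg_left this (by positivity)

lemma dyK_le {T x : ℝ} (hT : 0 < T) (hx : x ∈ Set.Icc (-T) T) (n : ℕ) :
    dyK T n x ≤ 2 ^ n := by
  have h : dyY T n x ≤ ((2 ^ n : ℕ) : ℝ) := by push_cast; exact dyY_le hT hx n
  calc dyK T n x ≤ ⌊((2 ^ n : ℕ) : ℝ)⌋₊ := Nat.floor_le_floor h
    _ = 2 ^ n := Nat.floor_natCast _

lemma gridpt_dyK_le {T x : ℝ} (hT : 0 < T) (hx : x ∈ Set.Icc (-T) T) (n : ℕ) :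
    gridpt T n (dyK T n x) ≤ x := by
  have h1 : (dyK T n x : ℝ) ≤ dyY T n x := Nat.floor_le (dyY_nonneg hT hx n)
  have key : 2 * T * dyY T n x / 2 ^ n = x + T := by
    unfold dyY; field_simp; try ring
  unfold gridpt
  have h2 : 2 * T * (dyK T n x : ℝ) / 2 ^ n ≤ 2 * T * dyY T n x / 2 ^ n := by
    gcongr
  rw [key] at h2
  linarith

lemma lt_gridpt_dyK {T x : ℝ} (hT : 0 < T) (hx : x ∈ Set.Icc (-T) T) (n : ℕ) :
    x < gridpt T n (dyK T n x) + 2 * T / 2 ^ n := by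
  have h1 : dyY T n x < (dyK T n x : ℝ) + 1 := Nat.lt_floor_add_one _
  have key : 2 * T * dyY T n x / 2 ^ n = x + T := by
    unfold dyY; field_simp; try ring
  unfold gridpt
  have h3 : 2 * T * dyY T n x / 2 ^ n < 2 * T * ((dyK T n x : ℝ) + 1) / 2 ^ n := by
    gcongr
  rw [key] at h3
  have h2 : 2 * T * ((dyK T n x : ℝ) + 1) / 2 ^ n
      = 2 * T * (dyK T n x : ℝ) / 2 ^ n + 2 * T / 2 ^ n := by ring
  linarith

lemma abs_sub_gridpt_le {T x : ℝ} (hT : 0 < T) (hx : x ∈ Set.Icc (-T) T) (n : ℕ) :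
    |x - gridpt T n (dyK T n x)| ≤ 2 * T / 2 ^ n := by
  rw [abs_of_nonneg (by linarith [gridpt_dyK_le hT hx n])]
  linarith [lt_gridpt_dyK hT hx n]

lemma dyK_succ {T x : ℝ} (hT : 0 < T) (hx : x ∈ Set.Icc (-T) T) (n : ℕ) :
    dyK T (n + 1) x = 2 * dyK T n x ∨ dyK T (n + 1) x = 2 * dyK T n x + 1 := by
  have hyy : dyY T (n + 1) x = 2 * dyY T n x := by
    unfold dyY; rw [pow_succ]; ring
  have h0 := dyY_nonneg hT hx n
  have hlow : 2 * dyK T n x ≤ dyK T (n + 1) x := by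
    refine Nat.le_floor ?_
    rw [hyy]; push_cast
    have := Nat.floor_le h0
    unfold dyK at *
    linarith
  have hup : dyK T (n + 1) x < 2 * dyK T n x + 2 := by
    refine Nat.floor_lt (by rw [hyy]; linarith) |>.mpr ?_
    rw [hyy]; push_cast
    have := Nat.lt_floor_add_one (dyY T n x)
    unfold dyK at *
    linarith
  omega

lemma gridpt_double (T : ℝ) (n k : ℕ) : gridpt T (n + 1) (2 * k) = gridpt T n k := by
  unfold gridpt
  rw [pow_succ]
  push_cast
  ring

lemma aux_chain {T c θ : ℝ} (hT : 0 < T) (hc : 0 ≤ c) (hθ0 : 0 < θ) (hθ1 : θ < 1)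
    {f : ℝ → ℝ} (hf : Continuous f) (m : ℕ)
    (H : ∀ j k : ℕ, k + 1 ≤ 2 ^ (m + j) →
      |f (gridpt T (m + j) (k + 1)) - f (gridpt T (m + j) k)| ≤ c * θ ^ (m + j))
    {s t : ℝ} (hs : s ∈ Set.Icc (-T) T) (ht : t ∈ Set.Icc (-T) T)
    (hst : |t - s| ≤ 2 * T / 2 ^ m) :
    |f t - f s| ≤ 2 * c * θ ^ m / (1 - θ) := by
  have h1θ : 0 < 1 - θ := by linarith
  have hsummable : Summable (fun j : ℕ => c * θ ^ (m + 1) * θ ^ j) :=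
    (summable_geometric_of_lt_one hθ0.le hθ1).mul_left _
  have htsum : ∑' j : ℕ, c * θ ^ (m + 1) * θ ^ j = c * θ ^ (m + 1) * (1 - θ)⁻¹ := by
    rw [tsum_mul_left, tsum_geometric_of_lt_one hθ0.le hθ1]
  have key : ∀ x, x ∈ Set.Icc (-T) T →
      |f x - f (gridpt T m (dyK T m x))| ≤ c * θ ^ (m + 1) * (1 - θ)⁻¹ := by
    intro x hx
    have step : ∀ j : ℕ,
        |f (gridpt T (m + j + 1) (dyK T (m + j + 1) x)) -
          f (gridpt T (m + j) (dyK T (m + j) x))| ≤ c * θ ^ (m + 1) * θ ^ j := by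
      intro j
      have hbound : c * θ ^ (m + j + 1) ≤ c * θ ^ (m + 1) * θ ^ j := by
        rw [show c * θ ^ (m + 1) * θ ^ j = c * θ ^ (m + 1 + j) from by rw [pow_add]; ring,
          show m + 1 + j = m + j + 1 from by omega]
      rcases dyK_succ hT hx (m + j) with h | h
      · rw [h, gridpt_double, sub_self, abs_zero]
        positivity
      · have hkk : 2 * dyK T (m + j) x + 1 ≤ 2 ^ (m + j + 1) := by
          have := dyK_le hT hx (m + j + 1)
          omega
        have hH := H (j + 1) (2 * dyK T (m + j) x)
          (by rw [show m + (j + 1) = m + j + 1 from by omega]; exact hkk)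
        rw [show m + (j + 1) = m + j + 1 from by omega] at hH
        rw [h, show gridpt T (m + j) (dyK T (m + j) x)
          = gridpt T (m + j + 1) (2 * dyK T (m + j) x) from (gridpt_double _ _ _).symm]
        exact le_trans hH hbound
    have tele : ∀ J : ℕ,
        |f (gridpt T (m + J) (dyK T (m + J) x)) - f (gridpt T m (dyK T m x))|
          ≤ ∑ j ∈ Finset.range J, c * θ ^ (m + 1) * θ ^ j := by
      intro J
      induction J with
      | zero => simp
      | succ J ih =>
        rw [Finset.sum_range_succ]
        calc |f (gridpt T (m + (J + 1)) (dyK T (m + (J + 1)) x)) - f (gridpt T m (dyK T m x))|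
            ≤ |f (gridpt T (m + (J + 1)) (dyK T (m + (J + 1)) x)) -
                  f (gridpt T (m + J) (dyK T (m + J) x))| +
              |f (gridpt T (m + J) (dyK T (m + J) x)) - f (gridpt T m (dyK T m x))| := by
              rw [show m + (J + 1) = m + J + 1 from by omega]
              exact abs_sub_le _ _ _
          _ ≤ c * θ ^ (m + 1) * θ ^ J + ∑ j ∈ Finset.range J, c * θ ^ (m + 1) * θ ^ j := by
              rw [show m + (J + 1) = m + J + 1 from by omega]
              exact add_le_add (step J) ih
          _ = ∑ j ∈ Finset.range J, c * θ ^ (m + 1) * θ ^ j + c * θ ^ (m + 1) * θ ^ J := by ring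
    have hpartial : ∀ J : ℕ, ∑ j ∈ Finset.range J, c * θ ^ (m + 1) * θ ^ j
        ≤ c * θ ^ (m + 1) * (1 - θ)⁻¹ := by
      intro J
      rw [← htsum]
      exact Summable.sum_le_tsum _ (fun j _ => by positivity) hsummable
    have hg : Tendsto (fun J : ℕ => gridpt T (m + J) (dyK T (m + J) x)) atTop (𝓝 x) := by
      rw [tendsto_iff_dist_tendsto_zero]
      have hb : ∀ J : ℕ, dist (gridpt T (m + J) (dyK T (m + J) x)) x
          ≤ (2 * T / 2 ^ m) * (1/2) ^ J := by
        intro J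
        rw [dist_comm, Real.dist_eq]
        refine (abs_sub_gridpt_le hT hx (m + J)).trans (le_of_eq ?_)
        rw [pow_add, div_pow, one_pow]
        field_simp
      refine squeeze_zero (fun J => dist_nonneg) hb ?_
      have h1 := tendsto_pow_atTop_nhds_zero_of_lt_one
        (by norm_num : (0:ℝ) ≤ 1/2) (by norm_num : (1/2:ℝ) < 1)
      have h2 := h1.const_mul (2 * T / 2 ^ m)
      simpa using h2
    have hf1 : Tendsto (fun J : ℕ => f (gridpt T (m + J) (dyK T (m + J) x))) atTop
        (𝓝 (f x)) := (hf.tendsto x).comp hg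
    have hf2 : Tendsto (fun J : ℕ => f (gridpt T (m + J) (dyK T (m + J) x))
        - f (gridpt T m (dyK T m x))) atTop (𝓝 (f x - f (gridpt T m (dyK T m x)))) :=
      hf1.sub tendsto_const_nhds
    have hten := hf2.abs
    exact le_of_tendsto hten (Filter.Eventually.of_forall
      (fun J => (tele J).trans (hpartial J)))
  have base : ∀ x y, x ∈ Set.Icc (-T) T → y ∈ Set.Icc (-T) T → x ≤ y →
      y - x ≤ 2 * T / 2 ^ m →
      |f (gridpt T m (dyK T m y)) - f (gridpt T m (dyK T m x))| ≤ c * θ ^ m := by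
    intro x y hxI hyI hxy hdiff
    have hyx : dyK T m x ≤ dyK T m y := by
      refine Nat.floor_le_floor ?_
      unfold dyY
      gcongr
    have hup : dyK T m y ≤ dyK T m x + 1 := by
      have h1 : dyY T m y ≤ dyY T m x + 1 := by
        have hkey : dyY T m y - dyY T m x = 2 ^ m * (y - x) / (2 * T) := by
          unfold dyY; field_simp; try ring
        have hc2 : (2:ℝ) ^ m * (2 * T / 2 ^ m) = 2 * T := by field_simp
        have hmul := mul_le_mul_of_nonneg_left hdiff
          (le_of_lt (pow_pos (show (0:ℝ) < 2 from by norm_num) m))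
        have h2 : 2 ^ m * (y - x) / (2 * T) ≤ 1 := by
          rw [div_le_one (by positivity)]
          linarith
        linarith
      calc dyK T m y ≤ ⌊dyY T m x + 1⌋₊ := Nat.floor_le_floor h1
        _ = dyK T m x + 1 := by
            rw [Nat.floor_add_one (dyY_nonneg hT hxI m)]
            rfl
    rcases Nat.eq_or_lt_of_le hyx with h | h
    · rw [← h, sub_self, abs_zero]; positivity
    · have heq : dyK T m y = dyK T m x + 1 := by omega
      have hk2 : dyK T m x + 1 ≤ 2 ^ m := heq ▸ dyK_le hT hyI m
      have hH := H 0 (dyK T m x) (by rw [Nat.add_zero]; exact hk2)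
      rw [Nat.add_zero] at hH
      rw [heq]
      exact hH
  have main : ∀ x y, x ∈ Set.Icc (-T) T → y ∈ Set.Icc (-T) T → x ≤ y →
      y - x ≤ 2 * T / 2 ^ m → |f y - f x| ≤ 2 * c * θ ^ m / (1 - θ) := by
    intro x y hxI hyI hxy hdiff
    have h1 := key y hyI
    have h2 := key x hxI
    have h3 := base x y hxI hyI hxy hdiff
    have tri : |f y - f x| ≤ |f y - f (gridpt T m (dyK T m y))| +
        |f (gridpt T m (dyK T m y)) - f (gridpt T m (dyK T m x))| +
        |f (gridpt T m (dyK T m x)) - f x| := by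
      calc |f y - f x| ≤ |f y - f (gridpt T m (dyK T m x))|
            + |f (gridpt T m (dyK T m x)) - f x| := abs_sub_le _ _ _
        _ ≤ (|f y - f (gridpt T m (dyK T m y))| +
              |f (gridpt T m (dyK T m y)) - f (gridpt T m (dyK T m x))|) +
            |f (gridpt T m (dyK T m x)) - f x| := by
            gcongr
            exact abs_sub_le _ _ _
    have h2' : |f (gridpt T m (dyK T m x)) - f x| ≤ c * θ ^ (m + 1) * (1 - θ)⁻¹ := by
      rw [abs_sub_comm]; exact h2
    have hfinal : c * θ ^ (m + 1) * (1 - θ)⁻¹ + c * θ ^ m + c * θ ^ (m + 1) * (1 - θ)⁻¹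
        ≤ 2 * c * θ ^ m / (1 - θ) := by
      have hu : (1 - θ) * (1 - θ)⁻¹ = 1 := mul_inv_cancel₀ (by linarith)
      have hθm : (0:ℝ) ≤ θ ^ m := by positivity
      rw [div_eq_mul_inv, pow_succ]
      nlinarith [mul_nonneg hc hθm, mul_pos (mul_pos hθ0 h1θ) (inv_pos.mpr h1θ)]
    linarith
  rcases le_total s t with h | h
  · exact main s t hs ht h (by rw [abs_of_nonneg (by linarith)] at hst; linarith)
  · rw [abs_sub_comm]
    refine main t s ht hs h ?_
    rw [abs_sub_comm, abs_of_nonneg (by linarith)] at hst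
    linarith

/-- **Tightness (asymptotic equicontinuity) of the scaled Gaussian input.** Under L1
and L2, with `δ` solving `u δ(u) = σ(δ(u))` for all large `u` and `δ(u) → 0`, for every
`T > 0` and `η > 0`:
`limsup_{u→∞} ℙ( sup_{s,t ∈ [−T,T], |t−s| ≤ ζ} |(J(δ(u)t) − J(δ(u)s))/σ(δ(u))| ≥ η )`
tends to `0` as `ζ ↓ 0`. -/
theorem tightness_scaled_gaussian_input
    {Ω : Type*} [MeasurableSpace Ω] (P : Measure Ω) [IsProbabilityMeasure P]
    (σ : ℝ → ℝ) (hσcont : ContinuousOn σ (Set.Ici 0)) (hσ0 : σ 0 = 0)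
    (hσpos : ∀ t > (0:ℝ), 0 < σ t)
    (J : ℝ → Ω → ℝ) (hJcont : ∀ ω, Continuous fun t => J t ω)
    (hJ0 : ∀ ω, J 0 ω = 0)
    (hJgauss : IsCenteredGaussian1 P J (covFromStd σ))
    -- assumption L1
    (lam : ℝ) (hlam : lam ∈ Set.Ioo (0:ℝ) 1)
    (hL1 : ∀ t > (0:ℝ), Tendsto (fun x => σ (t * x) / σ x) (𝓝[>] 0) (𝓝 (t ^ lam)))
    -- assumption L2
    (t₀ β C : ℝ) (ht₀ : 0 < t₀) (hβ : β ∈ Set.Ioo (0:ℝ) 1) (hC : 0 < C)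
    (hL2 : ∀ t > t₀, σ t ≤ C * t ^ β)
    -- the scaling function δ
    (δ : ℝ → ℝ)
    (hδ : ∀ᶠ u in atTop, 0 < δ u ∧ u * δ u = σ (δ u))
    (hδ0 : Tendsto δ atTop (𝓝 0)) :
    ∀ T > (0:ℝ), ∀ η > (0:ℝ),
      Tendsto (fun ζ : ℝ =>
          limsup (fun u =>
            (P {ω | η ≤
                ⨆ p : {p : ℝ × ℝ // p.1 ∈ Set.Icc (-T) T ∧ p.2 ∈ Set.Icc (-T) T ∧
                    |p.2 - p.1| ≤ ζ},
                  |(J (δ u * p.1.2) ω - J (δ u * p.1.1) ω) / σ (δ u)|}).toReal) atTop)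
        (𝓝[>] 0) (𝓝 0) := by
  intro T hT η hη
  obtain ⟨hlam0, hlam1⟩ := hlam
  -- the contraction ratio q
  have hq0' : (0:ℝ) < (1/2 : ℝ) ^ lam := Real.rpow_pos_of_pos (by norm_num) _
  have hq1' : ((1/2:ℝ)) ^ lam < 1 := Real.rpow_lt_one (by norm_num) (by norm_num) hlam0
  set q : ℝ := ((1/2:ℝ) ^ lam + 1) / 2 with hq_def
  have hq0 : 0 < q := by rw [hq_def]; linarith
  have hq1 : q < 1 := by rw [hq_def]; linarith
  have hqgt : (1/2:ℝ) ^ lam < q := by rw [hq_def]; linarith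
  -- halving estimate near 0
  obtain ⟨x₁, hx₁, hhalf⟩ : ∃ x₁ > 0, ∀ x : ℝ, 0 < x → x ≤ x₁ →
      σ (1/2 * x) ≤ q * σ x := by
    have h := (hL1 (1/2) (by norm_num)).eventually_lt_const hqgt
    obtain ⟨ε, hε, hsub⟩ := Metric.mem_nhdsWithin_iff.mp h
    refine ⟨ε/2, by positivity, fun x hx hxe => ?_⟩
    have hmem : x ∈ Metric.ball (0:ℝ) ε ∩ Set.Ioi 0 := by
      constructor
      · rw [Metric.mem_ball, Real.dist_eq, sub_zero, abs_of_pos hx]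
        linarith
      · exact hx
    have hlt : σ (1/2 * x) / σ x < q := hsub hmem
    have hσx := hσpos x hx
    rw [div_lt_iff₀ hσx] at hlt
    linarith
  -- iterated halving
  have hiter : ∀ n : ℕ, ∀ x : ℝ, 0 < x → x ≤ x₁ →
      σ ((1/2:ℝ) ^ n * x) ≤ q ^ n * σ x := by
    intro n
    induction n with
    | zero => intro x hx hxe; simp
    | succ n ih =>
      intro x hx hxe
      have hhx : σ (1/2 * x) ≤ q * σ x := hhalf x hx hxe
      have h2 : 0 < (1/2:ℝ) * x := by positivity
      have h3 : (1/2:ℝ) * x ≤ x₁ := le_trans (by linarith) hxe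
      have h4 := ih ((1/2:ℝ) * x) h2 h3
      calc σ ((1/2:ℝ) ^ (n+1) * x) = σ ((1/2:ℝ) ^ n * (1/2 * x)) := by
            rw [show (1/2:ℝ) ^ (n+1) * x = (1/2:ℝ) ^ n * (1/2 * x) from by rw [pow_succ]; ring]
        _ ≤ q ^ n * σ (1/2 * x) := h4
        _ ≤ q ^ n * (q * σ x) := mul_le_mul_of_nonneg_left hhx (by positivity)
        _ = q ^ (n+1) * σ x := by rw [pow_succ]; ring
  -- comparison at scale 2T
  set M : ℝ := (2*T) ^ lam + 1 with hM_def
  have hM0 : 0 < M := by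
    have : (0:ℝ) < (2*T) ^ lam := Real.rpow_pos_of_pos (by linarith) _
    rw [hM_def]; linarith
  obtain ⟨x₂, hx₂, hMb⟩ : ∃ x₂ > 0, ∀ x : ℝ, 0 < x → x ≤ x₂ →
      σ (2*T*x) ≤ M * σ x := by
    have h := (hL1 (2*T) (by linarith)).eventually_lt_const
      (show (2*T:ℝ) ^ lam < M from by rw [hM_def]; linarith)
    obtain ⟨ε, hε, hsub⟩ := Metric.mem_nhdsWithin_iff.mp h
    refine ⟨ε/2, by positivity, fun x hx hxe => ?_⟩
    have hmem : x ∈ Metric.ball (0:ℝ) ε ∩ Set.Ioi 0 := by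
      constructor
      · rw [Metric.mem_ball, Real.dist_eq, sub_zero, abs_of_pos hx]
        linarith
      · exact hx
    have hlt : σ (2*T*x) / σ x < M := hsub hmem
    have hσx := hσpos x hx
    rw [div_lt_iff₀ hσx] at hlt
    linarith
  -- θ and c
  set θ : ℝ := Real.sqrt q with hθ_def
  have hθ0 : 0 < θ := Real.sqrt_pos.mpr hq0
  have hθsq : θ ^ 2 = q := Real.sq_sqrt hq0.le
  have hθ1 : θ < 1 := by nlinarith
  have hqθ : q ≤ θ := by nlinarith
  have h1θ : 0 < 1 - θ := by linarith
  set c : ℝ := η * (1 - θ) / 4 with hc_def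
  have hc0 : 0 < c := by rw [hc_def]; exact div_pos (mul_pos hη h1θ) (by norm_num)
  set D : ℝ := c ^ 2 / (2 * M ^ 2) with hD_def
  have hD0 : 0 < D := by rw [hD_def]; positivity
  obtain ⟨k, hk⟩ : ∃ k : ℕ, q ^ k < 1/4 := exists_pow_lt_of_lt_one (by norm_num) hq1
  set E : ℝ := 2 * (M / c) * (Nat.factorial k : ℝ) / D ^ k with hE_def
  have hE0 : 0 < E := by
    rw [hE_def]
    have : (0:ℝ) < (Nat.factorial k : ℝ) := by positivity
    positivity
  -- the level-n bound
  have hlvl : ∀ n : ℕ, (2:ℝ) ^ n *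
      (2 * ((M * q ^ n) / (c * θ ^ n)) * Real.exp (-(c * θ ^ n) ^ 2 / (2 * (M * q ^ n) ^ 2)))
      ≤ E * (1/2) ^ n := by
    intro n
    have hqn : 0 < q ^ n := pow_pos hq0 n
    have hθn : 0 < θ ^ n := pow_pos hθ0 n
    have hsq : (c * θ ^ n) ^ 2 = c ^ 2 * q ^ n := by
      rw [mul_pow, ← pow_mul, mul_comm n 2, pow_mul, hθsq]
    have harg : -(c * θ ^ n) ^ 2 / (2 * (M * q ^ n) ^ 2) = -(D / q ^ n) := by
      rw [hsq, hD_def]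
      field_simp
    have hstep1 : (M * q ^ n) / (c * θ ^ n) ≤ M / c := by
      calc (M * q ^ n) / (c * θ ^ n) ≤ (M * θ ^ n) / (c * θ ^ n) := by
            gcongr
        _ = M / c := by
            rw [mul_comm M _, mul_comm c _, mul_div_mul_left _ _ (ne_of_gt hθn)]
    have hstep2 : Real.exp (-(c * θ ^ n) ^ 2 / (2 * (M * q ^ n) ^ 2))
        ≤ (Nat.factorial k : ℝ) * (q ^ k) ^ n / D ^ k := by
      rw [harg]
      refine (aux_exp_neg_le (div_pos hD0 hqn) k).trans (le_of_eq ?_)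
      rw [div_pow, div_div_eq_mul_div,
        show ((q:ℝ) ^ n) ^ k = (q ^ k) ^ n from by rw [← pow_mul, mul_comm, pow_mul]]
    calc (2:ℝ) ^ n * (2 * ((M * q ^ n) / (c * θ ^ n)) *
          Real.exp (-(c * θ ^ n) ^ 2 / (2 * (M * q ^ n) ^ 2)))
        ≤ (2:ℝ) ^ n * (2 * (M / c) * ((Nat.factorial k : ℝ) * (q ^ k) ^ n / D ^ k)) := by
          have hle1 : 2 * ((M * q ^ n) / (c * θ ^ n)) ≤ 2 * (M / c) :=
            mul_le_mul_of_nonneg_left hstep1 (by norm_num)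
          refine mul_le_mul_of_nonneg_left ?_ (by positivity)
          exact mul_le_mul hle1 hstep2 (Real.exp_nonneg _) (by positivity)
      _ = E * (2 * q ^ k) ^ n := by
          rw [hE_def, mul_pow]
          ring
      _ ≤ E * (1/2) ^ n := by
          refine mul_le_mul_of_nonneg_left ?_ hE0.le
          refine pow_le_pow_left₀ (by positivity) (by linarith) n
  clear_value M q θ c D E
  -- eventual facts about u
  have hev : ∀ᶠ u in atTop, (0 < δ u ∧ u * δ u = σ (δ u)) ∧ δ u ≤ x₂ ∧ 2*T*δ u ≤ x₁ := by
    have hmin : (0:ℝ) < min x₂ (x₁ / (2*T)) := lt_min hx₂ (by positivity)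
    filter_upwards [hδ, hδ0.eventually_lt_const hmin] with u hu1 hu2
    refine ⟨hu1, le_trans hu2.le (min_le_left _ _), ?_⟩
    have h3 : δ u ≤ x₁ / (2*T) := le_trans hu2.le (min_le_right _ _)
    calc 2*T*δ u ≤ 2*T*(x₁/(2*T)) := by gcongr
      _ = x₁ := by field_simp
  -- the main estimate
  have main : ∀ m : ℕ, ∀ ζ : ℝ, 0 < ζ → ζ ≤ 2*T/2^m →
      ∀ᶠ u in atTop,
        (P {ω | η ≤
            ⨆ p : {p : ℝ × ℝ // p.1 ∈ Set.Icc (-T) T ∧ p.2 ∈ Set.Icc (-T) T ∧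
                |p.2 - p.1| ≤ ζ},
              |(J (δ u * p.1.2) ω - J (δ u * p.1.1) ω) / σ (δ u)|}).toReal
          ≤ 2*E*(1/2)^m := by
    intro m ζ hζ0 hζle
    filter_upwards [hev] with u hu
    obtain ⟨⟨hδpos, hδeq⟩, hδx₂, hδx₁⟩ := hu
    have hσd : 0 < σ (δ u) := hσpos _ hδpos
    set A : ℕ → ℕ → Set Ω := fun n kk => {ω | c * θ ^ n <
      |(J (δ u * gridpt T n (kk+1)) ω - J (δ u * gridpt T n kk) ω) / σ (δ u)|} with hA_def
    -- inclusion into the union of increment events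
    have hincl : {ω | η ≤
        ⨆ p : {p : ℝ × ℝ // p.1 ∈ Set.Icc (-T) T ∧ p.2 ∈ Set.Icc (-T) T ∧
            |p.2 - p.1| ≤ ζ},
          |(J (δ u * p.1.2) ω - J (δ u * p.1.1) ω) / σ (δ u)|}
        ⊆ ⋃ (j : ℕ), ⋃ (kk : Fin (2^(m+j))), A (m+j) kk.val := by
      intro ω hω
      by_contra hUc
      simp only [Set.mem_iUnion, not_exists] at hUc
      have hω' : η ≤
          ⨆ p : {p : ℝ × ℝ // p.1 ∈ Set.Icc (-T) T ∧ p.2 ∈ Set.Icc (-T) T ∧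
              |p.2 - p.1| ≤ ζ},
            |(J (δ u * p.1.2) ω - J (δ u * p.1.1) ω) / σ (δ u)| := hω
      set f : ℝ → ℝ := fun x => J (δ u * x) ω / σ (δ u) with hf_def
      have hfc : Continuous f :=
        (((hJcont ω).comp (continuous_const.mul continuous_id)).div_const _)
      have H : ∀ j kk : ℕ, kk + 1 ≤ 2^(m+j) →
          |f (gridpt T (m+j) (kk+1)) - f (gridpt T (m+j) kk)| ≤ c * θ ^ (m+j) := by
        intro j kk hkk
        have h1 := hUc j ⟨kk, by omega⟩
        simp only [hA_def, Set.mem_setOf_eq, not_lt] at h1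
        calc |f (gridpt T (m+j) (kk+1)) - f (gridpt T (m+j) kk)|
            = |(J (δ u * gridpt T (m+j) (kk+1)) ω - J (δ u * gridpt T (m+j) kk) ω)
                / σ (δ u)| := by
              rw [hf_def, sub_div]
          _ ≤ c * θ ^ (m+j) := h1
      haveI hne : Nonempty {p : ℝ × ℝ // p.1 ∈ Set.Icc (-T) T ∧ p.2 ∈ Set.Icc (-T) T ∧
          |p.2 - p.1| ≤ ζ} :=
        ⟨⟨(-T, -T), ⟨le_rfl, show (-T:ℝ) ≤ T from by linarith⟩,
          ⟨le_rfl, show (-T:ℝ) ≤ T from by linarith⟩,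
          show |(-T:ℝ) - (-T)| ≤ ζ from by simp [hζ0.le]⟩⟩
      have hsup : (⨆ p : {p : ℝ × ℝ // p.1 ∈ Set.Icc (-T) T ∧ p.2 ∈ Set.Icc (-T) T ∧
              |p.2 - p.1| ≤ ζ},
            |(J (δ u * p.1.2) ω - J (δ u * p.1.1) ω) / σ (δ u)|) ≤ 2*c*θ^m/(1-θ) := by
        refine ciSup_le fun p => ?_
        have heq : |(J (δ u * p.1.2) ω - J (δ u * p.1.1) ω) / σ (δ u)|
            = |f p.1.2 - f p.1.1| := by
          rw [hf_def, sub_div]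
        rw [heq]
        exact aux_chain hT hc0.le hθ0 hθ1 hfc m H p.2.1 p.2.2.1 (le_trans p.2.2.2 hζle)
      have hlt : 2*c*θ^m/(1-θ) < η := by
        have hθm1 : θ ^ m ≤ 1 := pow_le_one₀ hθ0.le hθ1.le
        have hθmpos : 0 < θ ^ m := pow_pos hθ0 m
        have hne1 : (1 - θ) ≠ 0 := ne_of_gt h1θ
        have heqc : 2*c*θ^m/(1-θ) = η * θ ^ m / 2 := by
          rw [hc_def]
          field_simp
          ring
        rw [heqc]
        have hmm := mul_le_mul_of_nonneg_left hθm1 hη.le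
        linarith
      linarith [le_trans hω' hsup]
    -- probability of one increment event
    have hA_bound : ∀ n kk : ℕ, P (A n kk) ≤
        ENNReal.ofReal (2 * ((M * q ^ n) / (c * θ ^ n)) *
          Real.exp (-(c * θ ^ n) ^ 2 / (2 * (M * q ^ n) ^ 2))) := by
      intro n kk
      have hgd : δ u * gridpt T n (kk+1) - δ u * gridpt T n kk = δ u * (2*T/2^n) := by
        unfold gridpt
        push_cast
        field_simp
        ring
      have hpos' : 0 < δ u * (2*T/2^n) := by positivity
      have hY : Measurable (fun ω =>
          (J (δ u * gridpt T n (kk+1)) ω - J (δ u * gridpt T n kk) ω) / σ (δ u)) :=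
        ((hJgauss.1 _).sub (hJgauss.1 _)).div_const _
      have hlaw := aux_incr_law P σ hσ0 J hJgauss
        (δ u * gridpt T n (kk+1)) (δ u * gridpt T n kk) (ne_of_gt hσd)
      have hsetm : MeasurableSet {x : ℝ | c * θ ^ n < |x|} :=
        measurableSet_lt measurable_const measurable_abs
      have hPA : P (A n kk) = (gaussianReal 0
          ((σ |δ u * gridpt T n (kk+1) - δ u * gridpt T n kk| ^ 2
            / σ (δ u) ^ 2).toNNReal)) {x | c * θ ^ n < |x|} := by
        rw [← hlaw, Measure.map_apply hY hsetm]
        rfl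
      rw [hPA, hgd, abs_of_pos hpos']
      have hσbound : σ (δ u * (2*T/2^n)) ≤ M * q ^ n * σ (δ u) := by
        have harg2 : δ u * (2*T/2^n) = (1/2:ℝ)^n * (2*T*δ u) := by
          rw [div_pow, one_pow]
          field_simp
        rw [harg2]
        have h1 := hiter n (2*T*δ u) (by positivity) hδx₁
        have h2 := hMb (δ u) hδpos hδx₂
        calc σ ((1/2:ℝ)^n * (2*T*δ u)) ≤ q^n * σ (2*T*δ u) := h1
          _ ≤ q^n * (M * σ (δ u)) := mul_le_mul_of_nonneg_left h2 (by positivity)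
          _ = M * q^n * σ (δ u) := by ring
      have hσarg : 0 < σ (δ u * (2*T/2^n)) := hσpos _ hpos'
      have hsd : Real.sqrt (((σ (δ u * (2*T/2^n)) ^ 2 / σ (δ u) ^ 2 : ℝ)).toNNReal)
          ≤ M * q ^ n := by
        rw [Real.coe_toNNReal _ (by positivity)]
        rw [← div_pow, Real.sqrt_sq (by positivity)]
        rw [div_le_iff₀ hσd]
        exact hσbound
      refine le_trans (measure_mono (show {x : ℝ | c * θ ^ n < |x|} ⊆ {x : ℝ | c * θ ^ n ≤ |x|}
        from fun x hx => le_of_lt (show c * θ ^ n < |x| from hx))) ?_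
      exact aux_gauss_tail (by positivity) (by positivity) hsd
    -- union bound, level by level
    have hlevel : ∀ j : ℕ, P (⋃ (kk : Fin (2^(m+j))), A (m+j) kk.val)
        ≤ ENNReal.ofReal (E * (1/2)^(m+j)) := by
      intro j
      calc P (⋃ (kk : Fin (2^(m+j))), A (m+j) kk.val)
          ≤ ∑' kk : Fin (2^(m+j)), P (A (m+j) kk.val) := measure_iUnion_le _
        _ ≤ ∑' _kk : Fin (2^(m+j)), ENNReal.ofReal (2 * ((M * q ^ (m+j)) / (c * θ ^ (m+j))) *
              Real.exp (-(c * θ ^ (m+j)) ^ 2 / (2 * (M * q ^ (m+j)) ^ 2))) :=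
            ENNReal.tsum_le_tsum (fun kk => hA_bound _ _)
        _ = (2^(m+j) : ℕ) * ENNReal.ofReal (2 * ((M * q ^ (m+j)) / (c * θ ^ (m+j))) *
              Real.exp (-(c * θ ^ (m+j)) ^ 2 / (2 * (M * q ^ (m+j)) ^ 2))) := by
            rw [tsum_fintype, Finset.sum_const, Finset.card_univ, Fintype.card_fin,
              nsmul_eq_mul]
        _ ≤ ENNReal.ofReal (E * (1/2)^(m+j)) := by
            rw [← ENNReal.ofReal_natCast (2^(m+j)), ← ENNReal.ofReal_mul (by positivity)]
            refine ENNReal.ofReal_le_ofReal ?_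
            have h := hlvl (m+j)
            push_cast
            exact h
    -- full union bound
    have hUb : P (⋃ (j : ℕ), ⋃ (kk : Fin (2^(m+j))), A (m+j) kk.val)
        ≤ ENNReal.ofReal (2*E*(1/2)^m) := by
      calc P (⋃ (j : ℕ), ⋃ (kk : Fin (2^(m+j))), A (m+j) kk.val)
          ≤ ∑' j : ℕ, P (⋃ (kk : Fin (2^(m+j))), A (m+j) kk.val) := measure_iUnion_le _
        _ ≤ ∑' j : ℕ, ENNReal.ofReal (E * (1/2)^(m+j)) := ENNReal.tsum_le_tsum hlevel
        _ = ENNReal.ofReal (∑' j : ℕ, E * (1/2)^(m+j)) := by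
            rw [ENNReal.ofReal_tsum_of_nonneg (fun j => by positivity) ?_]
            · refine (summable_geometric_of_lt_one (by norm_num : (0:ℝ) ≤ 1/2)
                (by norm_num)).mul_left (E * (1/2)^m) |>.congr ?_
              intro j
              rw [pow_add]
              ring
        _ = ENNReal.ofReal (2*E*(1/2)^m) := by
            congr 1
            have hcongr : (fun j : ℕ => E * (1/2:ℝ)^(m+j))
                = fun j : ℕ => (E * (1/2:ℝ)^m) * (1/2:ℝ)^j := by
              funext j
              rw [pow_add]
              ring
            rw [hcongr, tsum_mul_left,
              tsum_geometric_of_lt_one (by norm_num : (0:ℝ) ≤ 1/2) (by norm_num)]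
            norm_num
            ring
    have hfinal := (measure_mono hincl).trans hUb
    calc (P {ω | η ≤
        ⨆ p : {p : ℝ × ℝ // p.1 ∈ Set.Icc (-T) T ∧ p.2 ∈ Set.Icc (-T) T ∧
            |p.2 - p.1| ≤ ζ},
          |(J (δ u * p.1.2) ω - J (δ u * p.1.1) ω) / σ (δ u)|}).toReal
        ≤ (ENNReal.ofReal (2*E*(1/2)^m)).toReal :=
          ENNReal.toReal_mono ENNReal.ofReal_ne_top hfinal
      _ = 2*E*(1/2)^m := ENNReal.toReal_ofReal (by positivity)
  -- conclusion
  rw [Metric.tendsto_nhdsWithin_nhds]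
  intro ε hε
  obtain ⟨m, hm⟩ : ∃ m : ℕ, 2*E*(1/2:ℝ)^m < ε := by
    have h1 := tendsto_pow_atTop_nhds_zero_of_lt_one
      (by norm_num : (0:ℝ) ≤ 1/2) (by norm_num : (1/2:ℝ) < 1)
    have h2 := h1.const_mul (2*E)
    rw [mul_zero] at h2
    exact (h2.eventually_lt_const hε).exists
  refine ⟨2*T/2^m, by positivity, ?_⟩
  intro ζ hζmem hζd
  have hζ0 : (0:ℝ) < ζ := hζmem
  rw [Real.dist_eq, sub_zero, abs_of_pos hζ0] at hζd
  have hbnd := main m ζ hζ0 hζd.le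
  rw [Real.dist_eq, sub_zero]
  have hub : limsup (fun u =>
      (P {ω | η ≤
          ⨆ p : {p : ℝ × ℝ // p.1 ∈ Set.Icc (-T) T ∧ p.2 ∈ Set.Icc (-T) T ∧
              |p.2 - p.1| ≤ ζ},
            |(J (δ u * p.1.2) ω - J (δ u * p.1.1) ω) / σ (δ u)|}).toReal) atTop
      ≤ 2*E*(1/2)^m := by
    refine limsup_le_of_le ?_ hbnd
    refine IsCoboundedUnder.of_frequently_ge (a := 0) ?_
    exact (Filter.Eventually.of_forall (fun u => ENNReal.toReal_nonneg)).frequently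
  have hlb : (0:ℝ) ≤ limsup (fun u =>
      (P {ω | η ≤
          ⨆ p : {p : ℝ × ℝ // p.1 ∈ Set.Icc (-T) T ∧ p.2 ∈ Set.Icc (-T) T ∧
              |p.2 - p.1| ≤ ζ},
            |(J (δ u * p.1.2) ω - J (δ u * p.1.1) ω) / σ (δ u)|}).toReal) atTop := by
    refine le_limsup_of_frequently_le ?_ ?_
    · exact (Filter.Eventually.of_forall (fun u => ENNReal.toReal_nonneg)).frequently
    · refine isBoundedUnder_of ⟨1, fun u => ?_⟩
      calc (P _).toReal ≤ (1 : ENNReal).toReal :=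
            ENNReal.toReal_mono ENNReal.one_ne_top prob_le_one
        _ = 1 := ENNReal.toReal_one
  rw [abs_of_nonneg hlb]
  exact lt_of_le_of_lt hub hm
end
end

section
/- Pathwise oscillation bound for the reflection (supremum) map. Let c > 0 and let f : ℝ → ℝ be continuous such that X̄(t) := sup_{−∞<s<t} ( f(t) − f(s) − c(t − s) ) is finite for every t ∈ ℝ. Then for all s ≤ t: | X̄(t) − X̄(s) | ≤ 2 · sup_{ s ≤ v ≤ w ≤ t } | f(w) − f(v) − c(w − v) |. -/
open Filter Topology

/-- **Pathwise oscillation bound for the reflection (supremum) map.** Let `c > 0` and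
let `f : ℝ → ℝ` be continuous such that `X̄(t) = sup_{−∞<s<t} (f(t) − f(s) − c(t−s))`
is finite (the defining set is bounded above) for every `t`. Then for all `s ≤ t`:
`|X̄(t) − X̄(s)| ≤ 2 sup_{s ≤ v ≤ w ≤ t} |f(w) − f(v) − c(w−v)|`. -/
theorem reflection_oscillation_bound
    (c : ℝ) (hc : 0 < c) (f : ℝ → ℝ) (hf : Continuous f)
    (hbdd : ∀ t : ℝ,
      BddAbove (Set.range fun s : Set.Iio t => f t - f ↑s - c * (t - ↑s))) :
    ∀ s t : ℝ, s ≤ t →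
      |(⨆ v : Set.Iio t, (f t - f ↑v - c * (t - ↑v)))
          - ⨆ v : Set.Iio s, (f s - f ↑v - c * (s - ↑v))|
        ≤ 2 * ⨆ p : {p : ℝ × ℝ // s ≤ p.1 ∧ p.1 ≤ p.2 ∧ p.2 ≤ t},
            |f p.1.2 - f p.1.1 - c * (p.1.2 - p.1.1)| := by
  intro s t hst
  -- notation
  set X : ℝ → ℝ := fun r => ⨆ v : Set.Iio r, (f r - f ↑v - c * (r - ↑v)) with hX
  set g : ℝ × ℝ → ℝ := fun p => |f p.2 - f p.1 - c * (p.2 - p.1)| with hg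
  set Kset : Set (ℝ × ℝ) := {p : ℝ × ℝ | s ≤ p.1 ∧ p.1 ≤ p.2 ∧ p.2 ≤ t} with hKset
  set M : ℝ := ⨆ p : {p : ℝ × ℝ // s ≤ p.1 ∧ p.1 ≤ p.2 ∧ p.2 ≤ t}, g p.1 with hM
  have hne : ∀ r : ℝ, Nonempty (Set.Iio r) := fun r => ⟨⟨r - 1, by simp⟩⟩
  have hKne : Nonempty {p : ℝ × ℝ // s ≤ p.1 ∧ p.1 ≤ p.2 ∧ p.2 ≤ t} :=
    ⟨⟨(s, s), le_refl s, le_refl s, hst⟩⟩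
  -- boundedness of the oscillation sup
  have hgc : Continuous g := by
    apply Continuous.abs
    exact ((hf.comp continuous_snd).sub (hf.comp continuous_fst)).sub
      (continuous_const.mul (continuous_snd.sub continuous_fst))
  have hKcl : IsClosed Kset := by
    have : Kset = {p : ℝ × ℝ | s ≤ p.1} ∩ ({p : ℝ × ℝ | p.1 ≤ p.2} ∩ {p : ℝ × ℝ | p.2 ≤ t}) := rfl
    rw [this]
    exact (isClosed_le continuous_const continuous_fst).inter
      ((isClosed_le continuous_fst continuous_snd).inter
        (isClosed_le continuous_snd continuous_const))
  have hKsub : Kset ⊆ Set.Icc s t ×ˢ Set.Icc s t := by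
    rintro p ⟨h1, h2, h3⟩
    exact ⟨⟨h1, h2.trans h3⟩, ⟨h1.trans h2, h3⟩⟩
  have hKcomp : IsCompact Kset :=
    (isCompact_Icc.prod isCompact_Icc).of_isClosed_subset hKcl hKsub
  have hMbdd : BddAbove (Set.range fun p : {p : ℝ × ℝ // s ≤ p.1 ∧ p.1 ≤ p.2 ∧ p.2 ≤ t} => g p.1) := by
    have hr : (Set.range fun p : {p : ℝ × ℝ // s ≤ p.1 ∧ p.1 ≤ p.2 ∧ p.2 ≤ t} => g p.1)
        = g '' Kset := (Set.image_eq_range g Kset).symm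
    rw [hr]
    exact (hKcomp.image hgc).bddAbove
  have hMle : ∀ v w : ℝ, s ≤ v → v ≤ w → w ≤ t → |f w - f v - c * (w - v)| ≤ M := by
    intro v w h1 h2 h3
    exact le_ciSup hMbdd ⟨(v, w), h1, h2, h3⟩
  have hM0 : 0 ≤ M := by
    have := hMle s s le_rfl le_rfl hst
    simpa using this
  -- nonnegativity of X s
  have hX0 : 0 ≤ X s := by
    have htend : Tendsto (fun v => f s - f v - c * (s - v)) (𝓝[<] s) (𝓝 0) := by
      have h1 : Tendsto (fun v => f s - f v - c * (s - v)) (𝓝 s)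
          (𝓝 (f s - f s - c * (s - s))) := by
        exact ((tendsto_const_nhds.sub (hf.tendsto s)).sub
          (tendsto_const_nhds.mul (tendsto_const_nhds.sub tendsto_id)))
      have h2 : f s - f s - c * (s - s) = 0 := by ring
      rw [h2] at h1
      exact h1.mono_left nhdsWithin_le_nhds
    refine le_of_tendsto htend ?_
    filter_upwards [self_mem_nhdsWithin] with v hv
    exact le_ciSup (hbdd s) ⟨v, hv⟩
  -- upper bound : X t ≤ X s + M
  have hub : X t ≤ X s + M := by
    apply ciSup_le
    rintro ⟨v, hv⟩
    by_cases hvs : v < s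
    · have h1 : f s - f v - c * (s - v) ≤ X s := le_ciSup (hbdd s) ⟨v, hvs⟩
      have h2 : f t - f s - c * (t - s) ≤ M :=
        (le_abs_self _).trans (hMle s t le_rfl hst le_rfl)
      have : f t - f v - c * (t - v)
          = (f s - f v - c * (s - v)) + (f t - f s - c * (t - s)) := by ring
      rw [this]; exact add_le_add h1 h2
    · push_neg at hvs
      have h2 : f t - f v - c * (t - v) ≤ M :=
        (le_abs_self _).trans (hMle v t hvs (le_of_lt hv) le_rfl)
      linarith
  -- lower bound : X s - M ≤ X t
  have hlb : X s ≤ X t + M := by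
    apply ciSup_le
    rintro ⟨v, hv⟩
    have hvt : v < t := lt_of_lt_of_le hv hst
    have h1 : f t - f v - c * (t - v) ≤ X t := le_ciSup (hbdd t) ⟨v, hvt⟩
    have h2 : -M ≤ f t - f s - c * (t - s) := (abs_le.mp (hMle s t le_rfl hst le_rfl)).1
    have heq : f s - f v - c * (s - v)
        = (f t - f v - c * (t - v)) - (f t - f s - c * (t - s)) := by ring
    linarith
  have : |X t - X s| ≤ M := abs_le.mpr ⟨by linarith, by linarith⟩
  linarith
end
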